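/- arXiv:1609.07235 — 4 statements merged into one kernel-verified Lean document; each statement's English description precedes it below -/
import Mathlib

section
/- For every s with 0 < s < 1 and every c with 0 < c < ∞, there exists a compact hereditarily non uniformly perfect set K ⊆ ℝ such that dim_H K = s and H^s(K) = c. -/
open MeasureTheory Filter Metric

/-- A compact set `F` with at least two points is uniformly perfect if there is `c > 0`
such that for every `a ∈ F` and every `r` with `0 < r < diam F` the annulus
`{y : c·r < ‖y − a‖ < r}` meets `F`. -/
def UniformlyPerfect {X : Type*} [NormedAddCommGroup X] (F : Set X) : Prop :=
  IsCompact F ∧ F.Nontrivial ∧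
    ∃ c : ℝ, 0 < c ∧ ∀ a ∈ F, ∀ r : ℝ, 0 < r → r < Metric.diam F →
      ∃ y ∈ F, c * r < ‖y - a‖ ∧ ‖y - a‖ < r

/-- A compact set is hereditarily non uniformly perfect (HNUP) if no (compact) subset
of it is uniformly perfect. -/
def HNUP {X : Type*} [NormedAddCommGroup X] (E : Set X) : Prop :=
  ∀ F : Set X, F ⊆ E → ¬ UniformlyPerfect F

namespace HNUPAux

open Set
open scoped ENNReal NNReal Topology Pointwise

noncomputable section

variable (k : ℕ) (s : ℝ)

/-- `q = k^{-1/s}`, the "envelope" ratio. -/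
def q : ℝ := (k : ℝ) ^ (-(1/s))

/-- `ρ = 1/(k+1)`, the building ratio. -/
def rho : ℝ := ((k : ℝ) + 1)⁻¹

/-- `g = ρ/q > 1`, the per-level slack gain. -/
def g : ℝ := rho k / q k s

/-- `e n = n - 2^{log₂ n}`: number of steps since the last "crash" level. -/
def e (n : ℕ) : ℕ := n - 2 ^ (Nat.log 2 n)

/-- Diameter of level-`n` cylinders. -/
def T (n : ℕ) : ℝ := q k s ^ n * g k s ^ e n

/-- Digit offsets associated with a scale sequence `W`. -/
def cseq (W : ℕ → ℝ) (n : ℕ) : ℝ := (W n - W (n + 1)) / ((k : ℝ) - 1)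

/-- The coding map attached to a scale sequence `W`. -/
def fW (W : ℕ → ℝ) (a : ℕ → Fin k) : ℝ := ∑' n, ((a n : ℕ) : ℝ) * cseq k W n

/-- Standing assumptions on the parameters. -/
structure Good : Prop where
  hk : 2 ≤ k
  hs0 : 0 < s
  hs1 : s < 1
  hq : q k s < rho k

variable {k s}

lemma Good.kR2 (h : Good k s) : (2 : ℝ) ≤ (k : ℝ) := by exact_mod_cast h.hk
lemma Good.kR0 (h : Good k s) : (0 : ℝ) < (k : ℝ) := by linarith [h.kR2]
lemma Good.kR1 (h : Good k s) : (1 : ℝ) ≤ (k : ℝ) - 1 := by linarith [h.kR2]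
lemma Good.qpos (h : Good k s) : 0 < q k s := Real.rpow_pos_of_pos h.kR0 _
lemma Good.rhopos (h : Good k s) : 0 < rho k := by
  have := h.kR0; rw [rho]; positivity
lemma Good.rholt (h : Good k s) : rho k < 1 := by
  rw [rho]; rw [inv_lt_one_iff₀]; right; linarith [h.kR2]
lemma Good.rhole3 (h : Good k s) : rho k ≤ 3⁻¹ := by
  rw [rho]
  have : (3:ℝ) ≤ (k:ℝ) + 1 := by linarith [h.kR2]
  exact inv_anti₀ (by norm_num) this
lemma Good.g1 (h : Good k s) : 1 < g k s := by
  rw [g, lt_div_iff₀ h.qpos, one_mul]; exact h.hq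
lemma Good.gpos (h : Good k s) : 0 < g k s := lt_trans one_pos h.g1
lemma Good.qg (h : Good k s) : q k s * g k s = rho k := by
  rw [g, mul_div_cancel₀ _ (ne_of_gt h.qpos)]

lemma Good.Tpos (h : Good k s) (n : ℕ) : 0 < T k s n := by
  have := h.qpos; have := h.gpos; rw [T]; positivity

lemma le_two_pow_pred {j : ℕ} (hj : 3 ≤ j) : j ≤ 2 ^ (j - 1) - 1 := by
  induction j with
  | zero => omega
  | succ i ih =>
    rcases Nat.lt_or_ge i 3 with hi | hi
    · interval_cases i <;> omega
    · have h1 := ih (by omega)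
      have h2 : 2 ^ (i + 1 - 1) = 2 * 2 ^ (i - 1) := by
        rw [Nat.add_sub_cancel]
        conv_lhs => rw [show i = (i - 1) + 1 by omega]
        ring
      omega

lemma e_pow2 (j : ℕ) : e (2 ^ j) = 0 := by
  rw [e, Nat.log_pow one_lt_two, Nat.sub_self]

lemma e_zero : e 0 = 0 := by simp [e]

lemma e_succ_of_ne {n : ℕ} (hn : ¬ ∃ j, n + 1 = 2 ^ j) : e (n + 1) = e n + 1 := by
  have hn0 : n ≠ 0 := by
    rintro rfl; exact hn ⟨0, rfl⟩
  have h1 : 2 ^ Nat.log 2 n ≤ n := Nat.pow_log_le_self 2 hn0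
  have h2 : n < 2 ^ (Nat.log 2 n + 1) := Nat.lt_pow_succ_log_self one_lt_two n
  have h3 : n + 1 < 2 ^ (Nat.log 2 n + 1) := by
    rcases lt_or_eq_of_le (Nat.succ_le_of_lt h2) with h | h
    · exact h
    · exact absurd ⟨Nat.log 2 n + 1, h⟩ hn
  have hlog : Nat.log 2 (n + 1) = Nat.log 2 n :=
    Nat.log_eq_of_pow_le_of_lt_pow (le_trans h1 (Nat.le_succ n)) h3
  rw [e, e, hlog]
  omega

lemma e_pred_pow2 {j : ℕ} (hj : 1 ≤ j) : e (2 ^ j - 1) = 2 ^ (j - 1) - 1 := by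
  obtain ⟨i, rfl⟩ : ∃ i, j = i + 1 := ⟨j - 1, by omega⟩
  have h2 : (2:ℕ) ^ (i+1) = 2 * 2 ^ i := by ring
  have hpos : 0 < 2 ^ i := Nat.pow_pos (by norm_num)
  have hlog : Nat.log 2 (2 ^ (i+1) - 1) = i := by
    apply Nat.log_eq_of_pow_le_of_lt_pow
    · omega
    · omega
  rw [e, hlog]
  have : i + 1 - 1 = i := by omega
  rw [this]
  omega

lemma Good.T_pow2 (h : Good k s) (j : ℕ) : T k s (2 ^ j) = q k s ^ (2 ^ j) := by
  rw [T, e_pow2, pow_zero, mul_one]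

lemma Good.T_zero (h : Good k s) : T k s 0 = 1 := by
  rw [T, e_zero, pow_zero, pow_zero, mul_one]

lemma Good.T_ratio (h : Good k s) (n : ℕ) : T k s (n + 1) ≤ rho k * T k s n := by
  by_cases hp : ∃ j, n + 1 = 2 ^ j
  · obtain ⟨j, hj⟩ := hp
    rw [T, T, hj, e_pow2, pow_zero, mul_one]
    have h1 : q k s ^ (2^j) = q k s * q k s ^ n := by
      rw [← hj, pow_succ, mul_comm]
    rw [h1]
    rw [← hj] at *
    have hg : (1:ℝ) ≤ g k s ^ e n := one_le_pow₀ (le_of_lt h.g1)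
    calc q k s * q k s ^ n ≤ rho k * q k s ^ n := by
          apply mul_le_mul_of_nonneg_right (le_of_lt h.hq) (le_of_lt (pow_pos h.qpos n))
    _ ≤ rho k * (q k s ^ n * g k s ^ e n) := by
          rw [mul_le_mul_iff_right₀ h.rhopos]
          nth_rewrite 1 [← mul_one (q k s ^ n)]
          exact mul_le_mul_of_nonneg_left hg (le_of_lt (pow_pos h.qpos n))
  · rw [T, T, e_succ_of_ne hp, pow_succ, pow_succ]
    have : q k s ^ n * q k s * (g k s ^ e n * g k s)
        = (q k s * g k s) * (q k s ^ n * g k s ^ e n) := by ring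
    rw [this, h.qg]

lemma Good.T_le (h : Good k s) (n : ℕ) : T k s n ≤ rho k ^ n := by
  induction n with
  | zero => rw [h.T_zero, pow_zero]
  | succ n ih =>
    calc T k s (n+1) ≤ rho k * T k s n := h.T_ratio n
    _ ≤ rho k * rho k ^ n := by
        exact mul_le_mul_of_nonneg_left ih (le_of_lt h.rhopos)
    _ = rho k ^ (n+1) := by ring

lemma Good.T_ge (h : Good k s) (n : ℕ) : q k s ^ n ≤ T k s n := by
  rw [T]
  nth_rewrite 1 [← mul_one (q k s ^ n)]
  exact mul_le_mul_of_nonneg_left (one_le_pow₀ (le_of_lt h.g1))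
    (le_of_lt (pow_pos h.qpos n))

lemma Good.T_anti (h : Good k s) (n : ℕ) : T k s (n + 1) ≤ T k s n := by
  calc T k s (n+1) ≤ rho k * T k s n := h.T_ratio n
  _ ≤ 1 * T k s n := by
        apply mul_le_mul_of_nonneg_right (le_of_lt h.rholt) (le_of_lt (h.Tpos n))
  _ = T k s n := one_mul _

lemma Good.T_lim (h : Good k s) : Tendsto (T k s) atTop (nhds 0) := by
  apply squeeze_zero (fun n => le_of_lt (h.Tpos n)) h.T_le
  exact tendsto_pow_atTop_nhds_zero_of_lt_one (le_of_lt h.rhopos) h.rholt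

/-- Crash levels: arbitrarily small scales at which the ratio `T (n+1) / T n` is below
any given `ε`.  -/
lemma Good.crash (h : Good k s) {ε δ : ℝ} (hε : 0 < ε) (hδ : 0 < δ) :
    ∃ n, T k s n < δ ∧ T k s (n + 1) ≤ ε * T k s n := by
  -- take n = 2^j - 1 for large j
  have hginv : 0 < (g k s)⁻¹ := inv_pos.mpr h.gpos
  have hginv1 : (g k s)⁻¹ < 1 := inv_lt_one_of_one_lt₀ h.g1
  have l1 : Tendsto (fun j : ℕ => ((g k s)⁻¹) ^ j) atTop (nhds 0) :=
    tendsto_pow_atTop_nhds_zero_of_lt_one (le_of_lt hginv) hginv1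
  have l2 : Tendsto (fun j : ℕ => rho k ^ j) atTop (nhds 0) :=
    tendsto_pow_atTop_nhds_zero_of_lt_one (le_of_lt h.rhopos) h.rholt
  have hε' : (0:ℝ) < ε / q k s := div_pos hε h.qpos
  obtain ⟨j₀, hj₀⟩ := ((l1.eventually (eventually_lt_nhds hε')).and
    (l2.eventually (eventually_lt_nhds hδ))).exists_forall_of_atTop
  set j := max j₀ 3 with hjdef
  obtain ⟨hgj, hrj⟩ := hj₀ j (le_max_left _ _)
  have hj3 : 3 ≤ j := le_max_right _ _
  have hjn : j ≤ 2 ^ j - 1 := by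
    have := Nat.lt_two_pow_self (n := j)
    omega
  have hmj : j ≤ 2 ^ (j - 1) - 1 := le_two_pow_pred hj3
  refine ⟨2 ^ j - 1, ?_, ?_⟩
  · -- T (2^j - 1) ≤ rho ^ (2^j - 1) ≤ rho ^ j < δ
    calc T k s (2 ^ j - 1) ≤ rho k ^ (2 ^ j - 1) := h.T_le _
    _ ≤ rho k ^ j := pow_le_pow_of_le_one (le_of_lt h.rhopos) (le_of_lt h.rholt) hjn
    _ < δ := hrj
  · have hsucc : 2 ^ j - 1 + 1 = 2 ^ j := by
      have := Nat.pow_pos (n := j) (show 0 < 2 by norm_num); omega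
    rw [hsucc, h.T_pow2, T, e_pred_pow2 (by omega : 1 ≤ j)]
    set m := 2 ^ (j - 1) - 1 with hm
    have hq2 : q k s ^ 2 ^ j = q k s * q k s ^ (2 ^ j - 1) := by
      rw [← pow_succ', hsucc]
    rw [hq2]
    have key : q k s ≤ ε * g k s ^ m := by
      have h1 : ((g k s)⁻¹) ^ m ≤ ((g k s)⁻¹) ^ j :=
        pow_le_pow_of_le_one (le_of_lt hginv) (le_of_lt hginv1) hmj
      have h2 : q k s * ((g k s)⁻¹) ^ j < q k s * (ε / q k s) :=
        mul_lt_mul_of_pos_left hgj h.qpos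
      rw [mul_div_cancel₀ _ (ne_of_gt h.qpos)] at h2
      have h3 : q k s * ((g k s)⁻¹) ^ m ≤ ε :=
        le_of_lt (lt_of_le_of_lt (mul_le_mul_of_nonneg_left h1 (le_of_lt h.qpos)) h2)
      have hgm : 0 < g k s ^ m := pow_pos h.gpos m
      rw [inv_pow] at h3
      calc q k s = q k s * (g k s ^ m)⁻¹ * g k s ^ m := by
            field_simp
      _ ≤ ε * g k s ^ m := mul_le_mul_of_nonneg_right h3 (le_of_lt hgm)
    calc q k s * q k s ^ (2 ^ j - 1) ≤ (ε * g k s ^ m) * q k s ^ (2 ^ j - 1) :=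
          mul_le_mul_of_nonneg_right key (le_of_lt (pow_pos h.qpos _))
    _ = ε * (q k s ^ (2 ^ j - 1) * g k s ^ m) := by ring

/-! ### The coding map machinery -/

section WMachine

variable (h : Good k s) (W : ℕ → ℝ) (hWanti : ∀ n, W (n + 1) ≤ W n)
  (hWlim : Tendsto W atTop (nhds 0))

lemma sum_blocks (n N : ℕ) :
    ∑ m ∈ Finset.range N, (W (m + n) - W (m + n + 1)) = W n - W (N + n) := by
  induction N with
  | zero => simp
  | succ N ih =>
    rw [Finset.sum_range_succ, ih]
    have : N + 1 + n = N + n + 1 := by omega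
    rw [this]; ring

include hWanti hWlim in
lemma hasSum_blocks (n : ℕ) :
    HasSum (fun m => W (m + n) - W (m + n + 1)) (W n) := by
  rw [hasSum_iff_tendsto_nat_of_nonneg (fun i => sub_nonneg.mpr (hWanti _)) _]
  simp only [sum_blocks]
  have h1 : Tendsto (fun N : ℕ => W (N + n)) atTop (nhds 0) :=
    hWlim.comp (tendsto_add_atTop_nat n)
  simpa using tendsto_const_nhds.sub h1

include hWanti hWlim in
lemma summable_blocks : Summable (fun m => W m - W (m + 1)) := by
  have := (hasSum_blocks W hWanti hWlim 0).summable
  simpa using this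

include h in
lemma cseq_nonneg (n : ℕ) (hW : W (n + 1) ≤ W n) : 0 ≤ cseq k W n :=
  div_nonneg (sub_nonneg.mpr hW) (by linarith [h.kR1])

include h hWanti in
lemma term_nonneg (a : ℕ → Fin k) (n : ℕ) : 0 ≤ ((a n : ℕ) : ℝ) * cseq k W n :=
  mul_nonneg (by positivity) (cseq_nonneg h W n (hWanti n))

include h hWanti in
lemma term_le (a : ℕ → Fin k) (n : ℕ) :
    ((a n : ℕ) : ℝ) * cseq k W n ≤ W n - W (n + 1) := by
  have h1 : ((a n : ℕ) : ℝ) ≤ (k : ℝ) - 1 := by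
    have := (a n).isLt
    have : ((a n : ℕ) : ℝ) ≤ (k : ℝ) - 1 := by
      have h2 : ((a n : ℕ) : ℝ) + 1 ≤ (k : ℝ) := by exact_mod_cast this
      linarith
    exact this
  have h2 : ((a n : ℕ) : ℝ) * cseq k W n ≤ ((k : ℝ) - 1) * cseq k W n :=
    mul_le_mul_of_nonneg_right h1 (cseq_nonneg h W n (hWanti n))
  have h3 : ((k : ℝ) - 1) * cseq k W n = W n - W (n + 1) := by
    have hne : (k : ℝ) - 1 ≠ 0 := by linarith [h.kR1]
    rw [cseq, mul_div_cancel₀ _ hne]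
  linarith

include h hWanti hWlim in
lemma summable_term (a : ℕ → Fin k) :
    Summable (fun n => ((a n : ℕ) : ℝ) * cseq k W n) :=
  Summable.of_nonneg_of_le (term_nonneg h W hWanti a) (term_le h W hWanti a)
    (summable_blocks W hWanti hWlim)

/-- The difference sequence of two codings. -/
def vseq (k : ℕ) (W : ℕ → ℝ) (a b : ℕ → Fin k) (n : ℕ) : ℝ :=
  ((a n : ℕ) : ℝ) * cseq k W n - ((b n : ℕ) : ℝ) * cseq k W n

include h hWanti in
lemma vseq_abs_le (a b : ℕ → Fin k) (n : ℕ) :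
    |vseq k W a b n| ≤ W n - W (n + 1) := by
  rw [vseq, abs_le]
  constructor
  · have := term_le h W hWanti b n
    have := term_nonneg h W hWanti a n
    linarith
  · have := term_le h W hWanti a n
    have := term_nonneg h W hWanti b n
    linarith

include h hWanti hWlim in
lemma summable_vseq (a b : ℕ → Fin k) : Summable (vseq k W a b) :=
  (summable_term h W hWanti hWlim a).sub (summable_term h W hWanti hWlim b)

include h hWanti hWlim in
lemma summable_vseq_abs (a b : ℕ → Fin k) : Summable (fun n => |vseq k W a b n|) :=
  (summable_vseq h W hWanti hWlim a b).abs

include h hWanti hWlim in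
lemma fW_sub (a b : ℕ → Fin k) : fW k W a - fW k W b = ∑' n, vseq k W a b n := by
  rw [fW, fW, ← Summable.tsum_sub (summable_term h W hWanti hWlim a) (summable_term h W hWanti hWlim b)]
  rfl

include h hWanti hWlim in
lemma tail_abs_le (a b : ℕ → Fin k) (n : ℕ) :
    |∑' m, vseq k W a b (m + n)| ≤ W n := by
  have hsum : Summable (fun m => vseq k W a b (m + n)) :=
    ((summable_vseq h W hWanti hWlim a b).comp_injective (add_left_injective n))
  have h1 : |∑' m, vseq k W a b (m + n)| ≤ ∑' m, |vseq k W a b (m + n)| := by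
    simpa using norm_tsum_le_tsum_norm (f := fun m => vseq k W a b (m + n)) hsum.abs
  have h2 : ∑' m, |vseq k W a b (m + n)| ≤ ∑' m, (W (m + n) - W (m + n + 1)) := by
    apply Summable.tsum_le_tsum (fun m => vseq_abs_le h W hWanti a b (m + n)) hsum.abs
    exact (hasSum_blocks W hWanti hWlim n).summable
  rw [(hasSum_blocks W hWanti hWlim n).tsum_eq] at h2
  linarith

include h hWanti hWlim in
lemma dist_fW_le (a b : ℕ → Fin k) (n : ℕ) (hag : ∀ m, m < n → a m = b m) :
    |fW k W a - fW k W b| ≤ W n := by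
  rw [fW_sub h W hWanti hWlim]
  have hv := summable_vseq h W hWanti hWlim a b
  rw [← Summable.sum_add_tsum_nat_add n hv]
  have h0 : ∑ m ∈ Finset.range n, vseq k W a b m = 0 := by
    apply Finset.sum_eq_zero
    intro m hm
    rw [vseq, hag m (Finset.mem_range.mp hm), sub_self]
  rw [h0, zero_add]
  exact tail_abs_le h W hWanti hWlim a b n

include h hWanti hWlim in
lemma sep_fW_le (a b : ℕ → Fin k) (n : ℕ) (hag : ∀ m, m < n → a m = b m)
    (hne : a n ≠ b n) :
    cseq k W n - W (n + 1) ≤ |fW k W a - fW k W b| := by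
  rw [fW_sub h W hWanti hWlim]
  have hv := summable_vseq h W hWanti hWlim a b
  rw [← Summable.sum_add_tsum_nat_add (n + 1) hv]
  have h0 : ∑ m ∈ Finset.range (n + 1), vseq k W a b m = vseq k W a b n := by
    rw [Finset.sum_range_succ]
    have : ∑ m ∈ Finset.range n, vseq k W a b m = 0 := by
      apply Finset.sum_eq_zero
      intro m hm
      rw [vseq, hag m (Finset.mem_range.mp hm), sub_self]
    rw [this, zero_add]
  rw [h0]
  have habs : cseq k W n ≤ |vseq k W a b n| := by
    rw [vseq, ← sub_mul, abs_mul]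
    have h1 : (1 : ℝ) ≤ |((a n : ℕ) : ℝ) - ((b n : ℕ) : ℝ)| := by
      have : (a n : ℕ) ≠ (b n : ℕ) := fun hc => hne (Fin.ext hc)
      have h2 : ((a n : ℕ) : ℤ) ≠ ((b n : ℕ) : ℤ) := by exact_mod_cast this
      have h3 : (1 : ℤ) ≤ |((a n : ℕ) : ℤ) - ((b n : ℕ) : ℤ)| :=
        Int.one_le_abs (sub_ne_zero.mpr h2)
      have h4 : (1 : ℝ) ≤ |(((a n : ℕ) : ℤ) : ℝ) - (((b n : ℕ) : ℤ) : ℝ)| := by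
        rw [← Int.cast_sub, ← Int.cast_abs]
        exact_mod_cast h3
      simpa using h4
    calc cseq k W n = 1 * cseq k W n := (one_mul _).symm
    _ ≤ |((a n : ℕ) : ℝ) - ((b n : ℕ) : ℝ)| * |cseq k W n| := by
        apply mul_le_mul h1 (le_abs_self _) (cseq_nonneg h W n (hWanti n)) (abs_nonneg _)
  have htail := tail_abs_le h W hWanti hWlim a b (n + 1)
  calc cseq k W n - W (n + 1) ≤ |vseq k W a b n| - |∑' m, vseq k W a b (m + (n + 1))| := by
        linarith
  _ ≤ |vseq k W a b n + ∑' m, vseq k W a b (m + (n + 1))| := by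
        have := abs_add_le (vseq k W a b n + ∑' m, vseq k W a b (m + (n + 1)))
          (-(∑' m, vseq k W a b (m + (n + 1))))
        simp only [add_neg_cancel_right, abs_neg] at this
        linarith

include h hWanti hWlim in
lemma fW_mem (a : ℕ → Fin k) : fW k W a ∈ Icc 0 (W 0) := by
  constructor
  · exact tsum_nonneg (term_nonneg h W hWanti a)
  · have h1 : fW k W a ≤ ∑' n, (W n - W (n + 1)) := by
      apply Summable.tsum_le_tsum (term_le h W hWanti a) (summable_term h W hWanti hWlim a)
        (summable_blocks W hWanti hWlim)
    have h2 : HasSum (fun m => W m - W (m + 1)) (W 0) := by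
      have := hasSum_blocks W hWanti hWlim 0
      simpa using this
    rw [h2.tsum_eq] at h1
    exact h1

include h hWanti hWlim in
lemma continuous_fW : Continuous (fW k W) := by
  apply continuous_tsum
  · intro n
    exact (continuous_of_discreteTopology
      (f := fun x : Fin k => ((x : ℕ) : ℝ) * cseq k W n)).comp (continuous_apply n)
  · exact summable_blocks W hWanti hWlim
  · intro n a
    rw [Real.norm_eq_abs, abs_of_nonneg (term_nonneg h W hWanti a n)]
    exact term_le h W hWanti a n

end WMachine

/-! ### The Cantor-type set -/

/-- The Cantor-type set. -/
def CSet (k : ℕ) (s : ℝ) : Set ℝ := Set.range (fW k (T k s))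

/-- Separation between distinct level-`n` cylinders. -/
def sepT (k : ℕ) (s : ℝ) (n : ℕ) : ℝ := cseq k (T k s) n - T k s (n + 1)

/-- The separation constant `β = 1/(k²-1)`. -/
def beta (k : ℕ) : ℝ := (((k : ℝ)) ^ 2 - 1)⁻¹

section CSetFacts

variable (h : Good k s)

include h

lemma Good.betapos : 0 < beta k := by
  rw [beta]
  have := h.kR2
  have h1 : (1:ℝ) < (k:ℝ) ^ 2 := by nlinarith
  exact inv_pos.mpr (by linarith)

lemma Good.rho_identity : rho k * ((k:ℝ) - 1)⁻¹ = beta k := by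
  have h2 := h.kR2
  rw [rho, beta]
  rw [← mul_inv]
  congr 1
  ring

lemma Good.beta_identity : (1 - rho k) * ((k:ℝ) - 1)⁻¹ - rho k = beta k := by
  have h2 := h.kR2
  have hne1 : (k:ℝ) - 1 ≠ 0 := by linarith
  have hne2 : (k:ℝ) + 1 ≠ 0 := by linarith
  have hne3 : (k:ℝ)^2 - 1 ≠ 0 := by nlinarith
  rw [rho, beta]
  field_simp
  ring

lemma Good.sep_ge (n : ℕ) : beta k * T k s n ≤ sepT k s n := by
  have h2 := h.kR2
  have hd : (0:ℝ) ≤ ((k:ℝ) - 1)⁻¹ := by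
    have : (0:ℝ) < (k:ℝ) - 1 := by linarith
    positivity
  have hr := h.T_ratio n
  have hTpos := h.Tpos n
  have key := h.beta_identity
  rw [sepT, cseq, div_eq_mul_inv]
  nlinarith [h.Tpos (n+1)]

lemma Good.sep_pos (n : ℕ) : 0 < sepT k s n :=
  lt_of_lt_of_le (mul_pos h.betapos (h.Tpos n)) (h.sep_ge n)

lemma Good.sep_succ_le (n : ℕ) : sepT k s (n + 1) ≤ beta k * T k s n := by
  have h2 := h.kR2
  have hkm : (0:ℝ) < (k:ℝ) - 1 := by linarith
  have h1 : sepT k s (n+1) ≤ cseq k (T k s) (n+1) := by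
    rw [sepT]
    linarith [h.Tpos (n+2)]
  have h3 : cseq k (T k s) (n+1) ≤ T k s (n+1) * ((k:ℝ) - 1)⁻¹ := by
    rw [cseq, div_eq_mul_inv]
    apply mul_le_mul_of_nonneg_right _ (le_of_lt (inv_pos.mpr hkm))
    linarith [h.Tpos (n+2)]
  have h4 : T k s (n+1) * ((k:ℝ) - 1)⁻¹ ≤ rho k * T k s n * ((k:ℝ) - 1)⁻¹ :=
    mul_le_mul_of_nonneg_right (h.T_ratio n) (le_of_lt (inv_pos.mpr hkm))
  have h5 : rho k * T k s n * ((k:ℝ) - 1)⁻¹ = beta k * T k s n := by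
    rw [← h.rho_identity]; ring
  linarith

lemma Good.sep_anti {m n : ℕ} (hmn : m ≤ n) : sepT k s n ≤ sepT k s m := by
  induction n with
  | zero => rw [Nat.le_zero.mp hmn]
  | succ n ih =>
    rcases Nat.lt_or_ge m (n+1) with hm | hm
    · have := h.sep_succ_le n
      have := h.sep_ge n
      have := ih (by omega)
      linarith
    · have : m = n + 1 := by omega
      rw [this]

lemma Good.injective_fT : Function.Injective (fW k (T k s)) := by
  intro a b hab
  by_contra hne
  have hex : ∃ m, a m ≠ b m := by
    by_contra hz
    push_neg at hz
    exact hne (funext hz)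
  set n := Nat.find hex with hn
  have h1 : a n ≠ b n := Nat.find_spec hex
  have h2 : ∀ m, m < n → a m = b m := by
    intro m hm
    by_contra hc
    exact absurd (Nat.find_le hc) (not_le.mpr hm)
  have h3 := sep_fW_le h (T k s) h.T_anti h.T_lim a b n h2 h1
  rw [hab, sub_self, abs_zero] at h3
  have := h.sep_pos n
  rw [sepT] at this
  linarith

lemma Good.isCompact_CSet : IsCompact (CSet k s) :=
  isCompact_range (continuous_fW h (T k s) h.T_anti h.T_lim)

lemma Good.hnup_CSet : HNUP (CSet k s) := by
  intro F hF hUP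
  obtain ⟨hFc, hFnt, cc, hcc, H⟩ := hUP
  have hdiam : 0 < diam F := by
    obtain ⟨x, hx, y, hy, hxy⟩ := hFnt
    have h1 : dist x y ≤ diam F := dist_le_diam_of_mem hFc.isBounded hx hy
    have h2 : 0 < dist x y := dist_pos.mpr hxy
    linarith
  obtain ⟨n, hn1, hn2⟩ := h.crash (mul_pos hcc h.betapos) hdiam
  set r := sepT k s n with hr
  have rpos : 0 < r := h.sep_pos n
  have hrT : r < diam F := by
    have h2 := h.kR2
    have hkm : (1:ℝ) ≤ (k:ℝ) - 1 := by linarith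
    have h1 : r ≤ cseq k (T k s) n := by
      rw [hr, sepT]; linarith [h.Tpos (n+1)]
    have h3 : cseq k (T k s) n ≤ T k s n := by
      rw [cseq]
      calc (T k s n - T k s (n+1)) / ((k:ℝ) - 1) ≤ (T k s n - T k s (n+1)) / 1 := by
            apply div_le_div_of_nonneg_left _ one_pos hkm
            linarith [h.Tpos (n+1), h.T_anti n]
      _ = T k s n - T k s (n+1) := div_one _
      _ ≤ T k s n := by linarith [h.Tpos (n+1)]
    linarith
  obtain ⟨a, ha⟩ := hFnt.nonempty
  obtain ⟨y, hyF, hy1, hy2⟩ := H a ha r rpos hrT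
  obtain ⟨α, hα⟩ := hF ha
  obtain ⟨γ, hγ⟩ := hF hyF
  by_cases hagree : ∀ m, m < n + 1 → γ m = α m
  · have hd : |fW k (T k s) γ - fW k (T k s) α| ≤ T k s (n+1) :=
      dist_fW_le h (T k s) h.T_anti h.T_lim γ α (n+1) hagree
    rw [hγ, hα] at hd
    have : T k s (n+1) ≤ cc * r := by
      calc T k s (n+1) ≤ cc * beta k * T k s n := hn2
      _ ≤ cc * sepT k s n := by
          rw [mul_assoc]
          exact mul_le_mul_of_nonneg_left (h.sep_ge n) (le_of_lt hcc)
      _ = cc * r := rfl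
    rw [Real.norm_eq_abs] at hy1
    linarith
  · push_neg at hagree
    obtain ⟨m, hmn, hm⟩ := hagree
    have hex : ∃ m', γ m' ≠ α m' := ⟨m, hm⟩
    set m0 := Nat.find hex with hm0
    have hm0n : m0 ≤ n := le_trans (Nat.find_le hm) (by omega)
    have h1 : γ m0 ≠ α m0 := Nat.find_spec hex
    have h2 : ∀ m', m' < m0 → γ m' = α m' := by
      intro m' hm'
      by_contra hc
      exact absurd (Nat.find_le hc) (not_le.mpr hm')
    have h3 := sep_fW_le h (T k s) h.T_anti h.T_lim γ α m0 h2 h1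
    rw [hγ, hα] at h3
    have h4 : sepT k s n ≤ sepT k s m0 := h.sep_anti hm0n
    rw [Real.norm_eq_abs] at hy2
    have h5 : sepT k s m0 = cseq k (T k s) m0 - T k s (m0 + 1) := rfl
    linarith

/-! ### Measure estimates -/

lemma Good.qpow_rpow (n : ℕ) : (q k s ^ n : ℝ) ^ s = ((k : ℝ)⁻¹) ^ n := by
  have hk0 : (0:ℝ) ≤ (k:ℝ) := le_of_lt h.kR0
  have hs : s ≠ 0 := ne_of_gt h.hs0
  rw [q, ← Real.rpow_natCast ((k:ℝ) ^ (-(1/s))) n, ← Real.rpow_mul hk0, ← Real.rpow_mul hk0]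
  have he : -(1/s) * (n:ℝ) * s = -(n:ℝ) := by field_simp
  rw [he]
  rw [Real.rpow_neg hk0, Real.rpow_natCast, inv_pow]

/-! ### Lower bound via a Hölder surjection onto [0,1] -/

/-- The geometric scale sequence `k⁻ⁿ`. -/
def W2 (k : ℕ) (n : ℕ) : ℝ := ((k : ℝ)⁻¹) ^ n

lemma Good.W2anti (n : ℕ) : W2 k (n + 1) ≤ W2 k n := by
  have h2 := h.kR2
  have h1 : (k:ℝ)⁻¹ ≤ 1 := by
    rw [inv_le_one_iff₀]; right; linarith
  have h0 : (0:ℝ) ≤ (k:ℝ)⁻¹ := by positivity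
  exact pow_le_pow_of_le_one h0 h1 (Nat.le_succ n)

lemma Good.W2lim : Tendsto (W2 k) atTop (nhds 0) := by
  have h2 := h.kR2
  apply tendsto_pow_atTop_nhds_zero_of_lt_one (by positivity)
  rw [inv_lt_one_iff₀]; right; linarith

lemma Good.cseq_W2 (n : ℕ) : cseq k (W2 k) n = ((k : ℝ)⁻¹) ^ (n + 1) := by
  have h2 := h.kR2
  have hk0 : (k:ℝ) ≠ 0 := by linarith
  have hk1 : (k:ℝ) - 1 ≠ 0 := by linarith
  rw [cseq, W2, W2, div_eq_iff hk1, pow_succ]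
  field_simp

lemma Good.exists_digits {x : ℝ} (hx : x ∈ Icc (0:ℝ) 1) :
    ∃ a : ℕ → Fin k, fW k (W2 k) a = x := by
  have h2 := h.kR2
  have hk0 : (0:ℝ) < (k:ℝ) := h.kR0
  have hkpos : 0 < k := by exact_mod_cast hk0
  -- the remainder sequence
  set rem : ℕ → ℝ := fun n => Nat.rec x
    (fun _ r => (k:ℝ) * r - ((min (k-1) (⌊(k:ℝ) * r⌋₊) : ℕ) : ℝ)) n with hrem
  have hrem0 : rem 0 = x := rfl
  have hrem_succ : ∀ n, rem (n+1) = (k:ℝ) * rem n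
      - ((min (k-1) (⌊(k:ℝ) * rem n⌋₊) : ℕ) : ℝ) := fun n => rfl
  -- digits
  have hdiglt : ∀ n, min (k-1) (⌊(k:ℝ) * rem n⌋₊) < k := fun n => by omega
  set a : ℕ → Fin k := fun n => ⟨min (k-1) (⌊(k:ℝ) * rem n⌋₊), hdiglt n⟩ with ha
  -- invariant
  have hinv : ∀ n, 0 ≤ rem n ∧ rem n ≤ 1 := by
    intro n
    induction n with
    | zero => exact ⟨hx.1, hx.2⟩
    | succ n ih =>
      obtain ⟨h0, h1⟩ := ih
      have hy0 : (0:ℝ) ≤ (k:ℝ) * rem n := by positivity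
      have hyk : (k:ℝ) * rem n ≤ (k:ℝ) := by nlinarith
      rcases le_or_gt (⌊(k:ℝ) * rem n⌋₊) (k-1) with hcase | hcase
      · have hmin : min (k-1) (⌊(k:ℝ) * rem n⌋₊) = ⌊(k:ℝ) * rem n⌋₊ :=
          min_eq_right hcase
        rw [hrem_succ, hmin]
        constructor
        · have := Nat.floor_le hy0
          linarith
        · have := Nat.lt_floor_add_one ((k:ℝ) * rem n)
          push_cast at this ⊢
          linarith
      · -- ⌊k * rem n⌋₊ ≥ k, so k * rem n = k and rem n = 1
        have hge : (k:ℕ) ≤ ⌊(k:ℝ) * rem n⌋₊ := by omega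
        have hky : ((k:ℕ):ℝ) ≤ (k:ℝ) * rem n := by
          calc ((k:ℕ):ℝ) ≤ (⌊(k:ℝ) * rem n⌋₊ : ℝ) := by exact_mod_cast hge
          _ ≤ (k:ℝ) * rem n := Nat.floor_le hy0
        have heq : (k:ℝ) * rem n = (k:ℝ) := le_antisymm hyk hky
        have hmin : min (k-1) (⌊(k:ℝ) * rem n⌋₊) = k-1 := min_eq_left (by omega)
        rw [hrem_succ, hmin, heq]
        have hc : ((k-1 : ℕ) : ℝ) = (k:ℝ) - 1 := by
          have : (1:ℕ) ≤ k := by omega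
          push_cast [this]
          ring
        rw [hc]
        constructor <;> linarith
  -- partial sums identity
  have hpartial : ∀ N, ∑ m ∈ Finset.range N, ((a m : ℕ) : ℝ) * ((k:ℝ)⁻¹) ^ (m+1)
      = x - rem N * ((k:ℝ)⁻¹) ^ N := by
    intro N
    induction N with
    | zero => simp [hrem0]
    | succ N ih =>
      rw [Finset.sum_range_succ, ih, hrem_succ]
      have hav : ((a N : ℕ) : ℝ) = ((min (k-1) (⌊(k:ℝ) * rem N⌋₊) : ℕ) : ℝ) := rfl
      rw [hav]
      have hks : (k:ℝ) * ((k:ℝ)⁻¹) ^ (N+1) = ((k:ℝ)⁻¹) ^ N := by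
        rw [pow_succ]
        have : (k:ℝ) ≠ 0 := by linarith
        field_simp
      linear_combination (rem N) * hks
  refine ⟨a, ?_⟩
  have hterm : ∀ m, ((a m : ℕ):ℝ) * cseq k (W2 k) m = ((a m : ℕ):ℝ) * ((k:ℝ)⁻¹)^(m+1) :=
    fun m => by rw [h.cseq_W2]
  have hinvk : (0:ℝ) < (k:ℝ)⁻¹ := by positivity
  have hhs : HasSum (fun m => ((a m : ℕ):ℝ) * cseq k (W2 k) m) x := by
    rw [hasSum_iff_tendsto_nat_of_nonneg
      (fun m => mul_nonneg (by positivity) (cseq_nonneg h (W2 k) m (h.W2anti m)))]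
    have heq : ∀ N, ∑ m ∈ Finset.range N, ((a m : ℕ):ℝ) * cseq k (W2 k) m
        = x - rem N * ((k:ℝ)⁻¹)^N := by
      intro N
      rw [Finset.sum_congr rfl (fun m _ => hterm m), hpartial]
    simp only [heq]
    have hp : Tendsto (fun N => rem N * ((k:ℝ)⁻¹)^N) atTop (nhds 0) := by
      apply squeeze_zero (fun n => mul_nonneg (hinv n).1 (by positivity))
        (g := fun n => ((k:ℝ)⁻¹)^n)
      · intro n
        calc rem n * ((k:ℝ)⁻¹)^n ≤ 1 * ((k:ℝ)⁻¹)^n :=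
              mul_le_mul_of_nonneg_right (hinv n).2 (by positivity)
        _ = ((k:ℝ)⁻¹)^n := one_mul _
      · apply tendsto_pow_atTop_nhds_zero_of_lt_one (by positivity)
        rw [inv_lt_one_iff₀]; right; linarith
    simpa using tendsto_const_nhds.sub hp
  exact hhs.tsum_eq

lemma Good.lower : μH[s] (CSet k s) ≠ 0 := by
  have hs0 := h.hs0
  have hk0' : 0 < k := by have := h.hk; omega
  haveI : Nonempty (Fin k) := ⟨⟨0, hk0'⟩⟩
  set piM : ℝ → ℝ := fun x => fW k (W2 k) (Function.invFun (fW k (T k s)) x) with hpiM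
  set C0 : ℝ := beta k ^ (-s) with hC0
  have hC0pos : 0 < C0 := Real.rpow_pos_of_pos h.betapos _
  have hHolder : HolderOnWith C0.toNNReal s.toNNReal piM (CSet k s) := by
    intro x hx y hy
    set ax := Function.invFun (fW k (T k s)) x with haxd
    set ay := Function.invFun (fW k (T k s)) y with hayd
    have hfx : fW k (T k s) ax = x := Function.invFun_eq hx
    have hfy : fW k (T k s) ay = y := Function.invFun_eq hy
    have hpx : piM x = fW k (W2 k) ax := rfl
    have hpy : piM y = fW k (W2 k) ay := rfl
    by_cases hab : ax = ay
    · have hxy : piM x = piM y := by rw [hpx, hpy, hab]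
      rw [hxy, edist_self]
      exact zero_le
    · have hex : ∃ m, ax m ≠ ay m := by
        by_contra hz; push_neg at hz; exact hab (funext hz)
      set n := Nat.find hex with hn
      have h1 : ax n ≠ ay n := Nat.find_spec hex
      have h2 : ∀ m, m < n → ax m = ay m := fun m hm => by
        by_contra hc; exact absurd (Nat.find_le hc) (not_le.mpr hm)
      have hd1 : |fW k (W2 k) ax - fW k (W2 k) ay| ≤ W2 k n :=
        dist_fW_le h (W2 k) h.W2anti h.W2lim ax ay n h2
      rw [← hpx, ← hpy] at hd1
      have hd2 : beta k * (q k s ^ n) ≤ |x - y| := by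
        have hsep := sep_fW_le h (T k s) h.T_anti h.T_lim ax ay n h2 h1
        rw [hfx, hfy] at hsep
        have hge := h.sep_ge n
        have hTg := h.T_ge n
        have hseprfl : sepT k s n = cseq k (T k s) n - T k s (n+1) := rfl
        nlinarith [h.betapos]
      have hqn : (0:ℝ) < q k s ^ n := pow_pos h.qpos n
      have hreal : |piM x - piM y| ≤ C0 * |x - y| ^ s := by
        have h3 : (beta k * q k s ^ n) ^ s ≤ |x - y| ^ s :=
          Real.rpow_le_rpow (le_of_lt (mul_pos h.betapos hqn)) hd2 (le_of_lt hs0)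
        have h4 : (beta k * q k s ^ n) ^ s = beta k ^ s * (q k s ^ n) ^ s :=
          Real.mul_rpow (le_of_lt h.betapos) (le_of_lt hqn)
        have h6 : C0 * beta k ^ s = 1 := by
          rw [hC0, ← Real.rpow_add h.betapos, neg_add_cancel, Real.rpow_zero]
        have h7 : (q k s ^ n) ^ s ≤ C0 * |x - y| ^ s := by
          rw [h4] at h3
          have h8 := mul_le_mul_of_nonneg_left h3 (le_of_lt hC0pos)
          rw [← mul_assoc, h6, one_mul] at h8
          exact h8
        have h9 : W2 k n = (q k s ^ n) ^ s := by
          rw [W2, h.qpow_rpow]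
        linarith
      rw [edist_dist, edist_dist, Real.dist_eq, Real.dist_eq]
      have hcoe : ((s.toNNReal : ℝ≥0) : ℝ) = s := Real.coe_toNNReal s (le_of_lt hs0)
      rw [hcoe]
      calc ENNReal.ofReal |piM x - piM y| ≤ ENNReal.ofReal (C0 * |x - y| ^ s) :=
            ENNReal.ofReal_le_ofReal hreal
      _ = ENNReal.ofReal C0 * ENNReal.ofReal (|x - y| ^ s) :=
            ENNReal.ofReal_mul (le_of_lt hC0pos)
      _ = (C0.toNNReal : ℝ≥0∞) * ENNReal.ofReal |x - y| ^ s := by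
            rw [ENNReal.ofReal_rpow_of_nonneg (abs_nonneg _) (le_of_lt hs0)]
            rfl
  have himg := hHolder.hausdorffMeasure_image_le
    (Real.toNNReal_pos.mpr hs0) (le_of_lt one_pos : (0:ℝ) ≤ 1)
  have hidx : ((s.toNNReal : ℝ≥0) : ℝ) * (1:ℝ) = s := by
    rw [mul_one, Real.coe_toNNReal _ (le_of_lt hs0)]
  rw [hidx] at himg
  have hsub : Icc (0:ℝ) 1 ⊆ piM '' CSet k s := by
    intro x hx
    obtain ⟨a, ha⟩ := h.exists_digits hx
    refine ⟨fW k (T k s) a, ⟨a, rfl⟩, ?_⟩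
    have : piM (fW k (T k s) a) = fW k (W2 k) (Function.invFun (fW k (T k s)) (fW k (T k s) a)) := rfl
    rw [this, Function.leftInverse_invFun h.injective_fT a, ha]
  have hvol : (1:ℝ≥0∞) ≤ μH[(1:ℝ)] (piM '' CSet k s) := by
    have hIcc : μH[(1:ℝ)] (Icc (0:ℝ) 1) = 1 := by
      rw [hausdorffMeasure_real]
      simp [Real.volume_Icc]
    rw [← hIcc]
    exact measure_mono hsub
  intro hzero
  rw [hzero, mul_zero] at himg
  have : (1:ℝ≥0∞) ≤ 0 := le_trans hvol himg
  simp at this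

lemma Good.upper : μH[s] (CSet k s) ≤ 1 := by
  have hs0 : (0:ℝ) ≤ s := le_of_lt h.hs0
  set t : (j : ℕ) → (Fin (2^j) → Fin k) → Set ℝ := fun j w =>
    fW k (T k s) '' {a : ℕ → Fin k | ∀ m : Fin (2^j), a (m : ℕ) = w m} with ht_def
  set r : ℕ → ℝ≥0∞ := fun j => ENNReal.ofReal (T k s (2^j)) with hr_def
  have hr : Tendsto r atTop (nhds 0) := by
    have h1 : Tendsto (fun j : ℕ => T k s (2^j)) atTop (nhds 0) := by
      apply h.T_lim.comp
      apply tendsto_atTop_mono (fun j => le_of_lt (Nat.lt_two_pow_self (n := j))) tendsto_id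
    have h2 := (ENNReal.continuous_ofReal.tendsto 0).comp h1
    rw [ENNReal.ofReal_zero] at h2; exact h2
  have ht : ∀ j, ∀ w : Fin (2^j) → Fin k, EMetric.diam (t j w) ≤ r j := by
    intro j w
    apply EMetric.diam_le
    rintro x ⟨a, ha, rfl⟩ y ⟨b, hb, rfl⟩
    have hab : ∀ m, m < 2^j → a m = b m := by
      intro m hm
      rw [ha ⟨m, hm⟩, hb ⟨m, hm⟩]
    have hd := dist_fW_le h (T k s) h.T_anti h.T_lim a b (2^j) hab
    rw [edist_dist, Real.dist_eq]
    exact ENNReal.ofReal_le_ofReal hd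
  have hst : ∀ j : ℕ, CSet k s ⊆ ⋃ w : Fin (2^j) → Fin k, t j w := by
    rintro j x ⟨a, rfl⟩
    exact Set.mem_iUnion.mpr ⟨fun m => a (m : ℕ), a, fun m => rfl, rfl⟩
  have hmain := Measure.hausdorffMeasure_le_liminf_sum s (CSet k s) r hr t
    (Eventually.of_forall ht) (Eventually.of_forall hst)
  refine le_trans hmain ?_
  have hbound : ∀ j : ℕ, ∑ w : Fin (2^j) → Fin k, EMetric.diam (t j w) ^ s ≤ 1 := by
    intro j
    have h1 : ∀ w : Fin (2^j) → Fin k, EMetric.diam (t j w) ^ s ≤ (r j) ^ s := fun w =>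
      ENNReal.rpow_le_rpow (ht j w) hs0
    calc ∑ w : Fin (2^j) → Fin k, EMetric.diam (t j w) ^ s
        ≤ ∑ _w : Fin (2^j) → Fin k, (r j) ^ s := Finset.sum_le_sum (fun w _ => h1 w)
    _ = (Fintype.card (Fin (2^j) → Fin k)) * (r j) ^ s := by
        rw [Finset.sum_const, nsmul_eq_mul]
        congr 1
    _ = (k ^ (2^j) : ℕ) * (r j) ^ s := by
        congr 2
        rw [Fintype.card_fun, Fintype.card_fin, Fintype.card_fin]
    _ ≤ 1 := by
        have hq : (r j) ^ s = ENNReal.ofReal (((k:ℝ)⁻¹) ^ (2^j)) := by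
          show (ENNReal.ofReal (T k s (2^j))) ^ s = _
          have hTpos := h.Tpos (2^j)
          rw [ENNReal.ofReal_rpow_of_pos hTpos]
          congr 1
          rw [h.T_pow2, h.qpow_rpow]
        rw [hq]
        have hcast : ((k ^ (2^j) : ℕ) : ℝ≥0∞) = ENNReal.ofReal ((k:ℝ) ^ (2^j)) := by
          rw [← ENNReal.ofReal_natCast]
          congr 1
          push_cast
          ring
        rw [hcast, ← ENNReal.ofReal_mul (by positivity)]
        rw [← mul_pow, mul_inv_cancel₀ (ne_of_gt h.kR0), one_pow]
        simp
  calc liminf (fun j => ∑ w : Fin (2^j) → Fin k, EMetric.diam (t j w) ^ s) atTop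
      ≤ liminf (fun _ : ℕ => (1 : ℝ≥0∞)) atTop :=
        liminf_le_liminf (Eventually.of_forall hbound)
  _ = 1 := liminf_const 1

end CSetFacts

/-! ### Choice of parameters -/

lemma exists_good (s : ℝ) (hs0 : 0 < s) (hs1 : s < 1) : ∃ k, Good k s := by
  have hp : 0 < 1/s - 1 := by
    have : 1 < 1/s := by
      rw [lt_div_iff₀ hs0]; linarith
    linarith
  have htend : Tendsto (fun n : ℕ => ((n:ℝ)) ^ (1/s - 1)) atTop atTop :=
    (tendsto_rpow_atTop hp).comp tendsto_natCast_atTop_atTop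
  obtain ⟨k, hk⟩ := ((htend.eventually_ge_atTop 2).and (eventually_ge_atTop 2)).exists
  obtain ⟨hk1, hk2⟩ := hk
  have hkR : (2:ℝ) ≤ (k:ℝ) := by exact_mod_cast hk2
  have hkR0 : (0:ℝ) < (k:ℝ) := by linarith
  refine ⟨k, hk2, hs0, hs1, ?_⟩
  have hkey : (k:ℝ) + 1 < (k:ℝ) ^ (1/s) := by
    have h1 : (k:ℝ) ^ (1/s) = (k:ℝ) ^ (1/s - 1) * (k:ℝ) := by
      have h2 := Real.rpow_add hkR0 (1/s - 1) 1
      rw [Real.rpow_one] at h2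
      rw [show (1/s - 1) + 1 = 1/s by ring] at h2
      exact h2
    rw [h1]
    nlinarith
  rw [q, rho, Real.rpow_neg (le_of_lt hkR0)]
  have hpos1 : (0:ℝ) < (k:ℝ) + 1 := by linarith
  have hpos2 : (0:ℝ) < (k:ℝ) ^ (1/s) := Real.rpow_pos_of_pos hkR0 _
  exact inv_strictAnti₀ hpos1 hkey

/-! ### Scaling invariance of uniform perfectness -/

lemma diam_smul_le (mu : ℝ) {F : Set ℝ} (hb : Bornology.IsBounded F) :
    diam (mu • F) ≤ |mu| * diam F := by
  apply diam_le_of_forall_dist_le (by positivity)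
  rintro _ ⟨x, hx, rfl⟩ _ ⟨y, hy, rfl⟩
  have : dist (mu • x) (mu • y) = |mu| * dist x y := by
    rw [smul_eq_mul, smul_eq_mul, Real.dist_eq, Real.dist_eq, ← abs_mul, mul_sub]
  rw [this]
  exact mul_le_mul_of_nonneg_left (dist_le_diam_of_mem hb hx hy) (abs_nonneg _)

lemma diam_smul {mu : ℝ} (hmu : mu ≠ 0) {F : Set ℝ} (hb : Bornology.IsBounded F) :
    diam (mu • F) = |mu| * diam F := by
  refine le_antisymm (diam_smul_le mu hb) ?_
  have hb2 : Bornology.IsBounded (mu • F) := hb.smul₀ mu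
  have h1 : diam (mu⁻¹ • (mu • F)) ≤ |mu⁻¹| * diam (mu • F) := diam_smul_le mu⁻¹ hb2
  rw [inv_smul_smul₀ hmu, abs_inv] at h1
  have habs : 0 < |mu| := abs_pos.mpr hmu
  have h2 := mul_le_mul_of_nonneg_left h1 (le_of_lt habs)
  rw [← mul_assoc, mul_inv_cancel₀ (ne_of_gt habs), one_mul] at h2
  exact h2

lemma smul_UP {F : Set ℝ} {mu : ℝ} (hmu : mu ≠ 0) (hUP : UniformlyPerfect F) :
    UniformlyPerfect (mu • F) := by
  obtain ⟨hFc, hFnt, cc, hcc, H⟩ := hUP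
  have habs : 0 < |mu| := abs_pos.mpr hmu
  have hcomp : IsCompact (mu • F) := by
    rw [← Set.image_smul]
    exact hFc.image (continuous_id.const_smul mu)
  have hb := hFc.isBounded
  have hdiam : diam (mu • F) = |mu| * diam F := diam_smul hmu hb
  refine ⟨hcomp, ?_, cc, hcc, ?_⟩
  · obtain ⟨x, hx, y, hy, hxy⟩ := hFnt
    exact ⟨mu • x, Set.smul_mem_smul_set hx, mu • y, Set.smul_mem_smul_set hy,
      fun hc => hxy (smul_right_injective ℝ hmu hc)⟩
  · rintro _ ⟨a0, ha0, rfl⟩ r hr0 hrd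
    rw [hdiam] at hrd
    have hr0' : 0 < r / |mu| := div_pos hr0 habs
    have hrd' : r / |mu| < diam F := by
      rw [div_lt_iff₀ habs]
      calc r < |mu| * diam F := hrd
      _ = diam F * |mu| := mul_comm _ _
    obtain ⟨y0, hy0, hy1, hy2⟩ := H a0 ha0 (r / |mu|) hr0' hrd'
    refine ⟨mu • y0, Set.smul_mem_smul_set hy0, ?_, ?_⟩
    · have : ‖mu • y0 - mu • a0‖ = |mu| * ‖y0 - a0‖ := by
        rw [smul_eq_mul, smul_eq_mul, ← mul_sub, Real.norm_eq_abs, Real.norm_eq_abs, abs_mul]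
      rw [this]
      calc cc * r = cc * (|mu| * (r / |mu|)) := by
            rw [mul_div_cancel₀ _ (ne_of_gt habs)]
      _ = |mu| * (cc * (r / |mu|)) := by ring
      _ < |mu| * ‖y0 - a0‖ := by
            exact mul_lt_mul_of_pos_left hy1 habs
    · have : ‖mu • y0 - mu • a0‖ = |mu| * ‖y0 - a0‖ := by
        rw [smul_eq_mul, smul_eq_mul, ← mul_sub, Real.norm_eq_abs, Real.norm_eq_abs, abs_mul]
      rw [this]
      calc |mu| * ‖y0 - a0‖ < |mu| * (r / |mu|) := mul_lt_mul_of_pos_left hy2 habs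
      _ = r := by rw [mul_div_cancel₀ _ (ne_of_gt habs)]

lemma hnup_smul {E : Set ℝ} (hE : HNUP E) {mu : ℝ} (hmu : mu ≠ 0) : HNUP (mu • E) := by
  intro F hF hUP
  apply hE (mu⁻¹ • F)
  · calc mu⁻¹ • F ⊆ mu⁻¹ • (mu • E) := Set.smul_set_mono hF
    _ = E := inv_smul_smul₀ hmu E
  · exact smul_UP (inv_ne_zero hmu) hUP

/-! ### Hitting the exact measure by intermediate values -/

lemma exists_Iic_measure_eq {s : ℝ} (hs0 : 0 < s) {K1 : Set ℝ} (hK : IsCompact K1)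
    {c : ℝ} (hc : 0 < c) (hm : μH[s] K1 = ENNReal.ofReal (2*c)) :
    ∃ t : ℝ, μH[s] (K1 ∩ Iic t) = ENNReal.ofReal c := by
  haveI := Measure.noAtoms_hausdorff (X := ℝ) hs0
  have hKm : MeasurableSet K1 := hK.isClosed.measurableSet
  have hfin : ∀ u : Set ℝ, u ⊆ K1 → μH[s] u ≠ ⊤ := by
    intro u hu
    have h1 : μH[s] u ≤ μH[s] K1 := measure_mono hu
    rw [hm] at h1
    exact ne_top_of_le_ne_top ENNReal.ofReal_ne_top h1
  set G : ℝ → ℝ := fun t => (μH[s] (K1 ∩ Iic t)).toReal with hG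
  have hGadd : ∀ t t' : ℝ, t ≤ t' →
      μH[s] (K1 ∩ Iic t') = μH[s] (K1 ∩ Iic t) + μH[s] (K1 ∩ Ioc t t') := by
    intro t t' htt
    rw [← measure_union _ (hKm.inter measurableSet_Ioc)]
    · congr 1
      rw [← Set.inter_union_distrib_left, Set.Iic_union_Ioc_eq_Iic htt]
    · exact Set.disjoint_of_subset Set.inter_subset_right Set.inter_subset_right
        (Set.Iic_disjoint_Ioc le_rfl)
  have hcont : Continuous G := by
    rw [continuous_iff_continuousAt]
    intro t
    rw [Metric.continuousAt_iff]
    intro ε hε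
    -- find n with μH[s] (K1 ∩ Ioc (t - 1/(n+1)) (t + 1/(n+1))) small
    set A : ℕ → Set ℝ := fun n => K1 ∩ Ioc (t - 1/(n+1)) (t + 1/(n+1)) with hA
    have hAm : ∀ n, NullMeasurableSet (A n) μH[s] :=
      fun n => (hKm.inter measurableSet_Ioc).nullMeasurableSet
    have hAanti : Antitone A := by
      intro n m hnm
      apply Set.inter_subset_inter_right
      apply Set.Ioc_subset_Ioc
      · have : 1/((m:ℝ)+1) ≤ 1/((n:ℝ)+1) := by
          apply one_div_le_one_div_of_le (by positivity)
          exact_mod_cast Nat.succ_le_succ hnm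
        linarith
      · have : 1/((m:ℝ)+1) ≤ 1/((n:ℝ)+1) := by
          apply one_div_le_one_div_of_le (by positivity)
          exact_mod_cast Nat.succ_le_succ hnm
        linarith
    have hAinter : ⋂ n, A n = K1 ∩ {t} := by
      ext x
      simp only [Set.mem_iInter, hA, Set.mem_inter_iff, Set.mem_Ioc, Set.mem_singleton_iff]
      constructor
      · intro hx
        refine ⟨(hx 0).1, ?_⟩
        have hge : t ≤ x := by
          by_contra hlt
          push_neg at hlt
          obtain ⟨n, hn⟩ := exists_nat_one_div_lt (show 0 < t - x by linarith)
          have := (hx n).2.1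
          linarith
        have hle : x ≤ t := by
          by_contra hlt
          push_neg at hlt
          obtain ⟨n, hn⟩ := exists_nat_one_div_lt (show 0 < x - t by linarith)
          have := (hx n).2.2
          linarith
        linarith
      · rintro ⟨hxK, rfl⟩
        intro n
        have : (0:ℝ) < 1/((n:ℝ)+1) := by positivity
        exact ⟨hxK, by linarith, by linarith⟩
    have htend : Tendsto (fun n => μH[s] (A n)) atTop (nhds 0) := by
      have h1 := tendsto_measure_iInter_atTop (μ := μH[s]) hAm hAanti
        ⟨0, hfin (A 0) Set.inter_subset_left⟩
      rw [hAinter] at h1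
      have h2 : μH[s] (K1 ∩ {t}) = 0 := by
        apply measure_mono_null Set.inter_subset_right
        exact measure_singleton t
      rw [h2] at h1
      exact h1
    have htendR : Tendsto (fun n => (μH[s] (A n)).toReal) atTop (nhds 0) := by
      have := (ENNReal.tendsto_toReal (by simp)).comp htend
      rw [ENNReal.toReal_zero] at this; exact this
    obtain ⟨n, hn⟩ := (htendR.eventually (eventually_lt_nhds hε)).exists
    refine ⟨1/((n:ℝ)+1), by positivity, ?_⟩
    intro t' ht'
    rw [Real.dist_eq] at ht'
    have hd : |G t' - G t| ≤ (μH[s] (A n)).toReal := by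
      rcases le_or_gt t t' with hcase | hcase
      · have h1 := hGadd t t' hcase
        have h2 : μH[s] (K1 ∩ Ioc t t') ≤ μH[s] (A n) := by
          apply measure_mono
          apply Set.inter_subset_inter_right
          apply Set.Ioc_subset_Ioc
          · have : (0:ℝ) < 1/((n:ℝ)+1) := by positivity
            linarith
          · rw [abs_lt] at ht'
            linarith [ht'.2]
        have h3 : G t' - G t = (μH[s] (K1 ∩ Ioc t t')).toReal := by
          rw [hG]
          simp only
          rw [h1, ENNReal.toReal_add (hfin _ Set.inter_subset_left)
            (hfin _ Set.inter_subset_left)]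
          ring
        rw [h3] at *
        rw [abs_of_nonneg (ENNReal.toReal_nonneg)]
        exact ENNReal.toReal_mono (hfin _ Set.inter_subset_left) h2
      · have h1 := hGadd t' t (le_of_lt hcase)
        have h2 : μH[s] (K1 ∩ Ioc t' t) ≤ μH[s] (A n) := by
          apply measure_mono
          apply Set.inter_subset_inter_right
          apply Set.Ioc_subset_Ioc
          · rw [abs_lt] at ht'
            linarith [ht'.1]
          · have : (0:ℝ) < 1/((n:ℝ)+1) := by positivity
            linarith
        have h3 : G t - G t' = (μH[s] (K1 ∩ Ioc t' t)).toReal := by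
          rw [hG]
          simp only
          rw [h1, ENNReal.toReal_add (hfin _ Set.inter_subset_left)
            (hfin _ Set.inter_subset_left)]
          ring
        rw [abs_sub_comm, h3]
        rw [abs_of_nonneg (ENNReal.toReal_nonneg)]
        exact ENNReal.toReal_mono (hfin _ Set.inter_subset_left) h2
    calc |G t' - G t| ≤ (μH[s] (A n)).toReal := hd
    _ < ε := hn
  -- bounds
  obtain ⟨M, hM⟩ := hK.isBounded.subset_closedBall 0
  rw [Real.closedBall_eq_Icc, zero_sub, zero_add] at hM
  have hGM : G M = 2*c := by
    have : K1 ∩ Iic M = K1 := by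
      apply Set.inter_eq_self_of_subset_left
      intro x hx
      exact (hM hx).2
    rw [hG]
    simp only
    rw [this, hm, ENNReal.toReal_ofReal (by linarith)]
  have hGm : G (-M - 1) = 0 := by
    have : K1 ∩ Iic (-M - 1) = ∅ := by
      ext x
      simp only [Set.mem_inter_iff, Set.mem_Iic, Set.mem_empty_iff_false, iff_false]
      rintro ⟨hx, hx2⟩
      have := (hM hx).1
      linarith
    rw [hG]
    simp only
    rw [this, measure_empty, ENNReal.toReal_zero]
  have hMm : -M - 1 ≤ M := by
    by_contra hcon
    push_neg at hcon
    have : M < -1/2 := by linarith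
    have hK1e : K1 = ∅ := by
      apply Set.eq_empty_of_subset_empty
      apply hM.trans
      intro x hx
      exact absurd (le_trans hx.1 hx.2) (by simp; linarith)
    rw [hK1e, measure_empty] at hm
    have : (0:ℝ) < 2*c := by linarith
    rw [← ENNReal.ofReal_zero] at hm
    have := ENNReal.ofReal_eq_ofReal_iff (le_refl (0:ℝ)) (by linarith) |>.mp hm
    linarith
  have hiv := intermediate_value_Icc hMm hcont.continuousOn
  have hcm : c ∈ Icc (G (-M-1)) (G M) := by
    rw [hGm, hGM]
    constructor <;> linarith
  obtain ⟨t0, _, ht0⟩ := hiv hcm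
  refine ⟨t0, ?_⟩
  have hne := hfin (K1 ∩ Iic t0) Set.inter_subset_left
  have ht0' : (μH[s] (K1 ∩ Iic t0)).toReal = c := ht0
  rw [← ENNReal.ofReal_toReal hne, ht0']

end

end HNUPAux



open scoped Pointwise ENNReal NNReal in
/-- For every `0 < s < 1` and `0 < c < ∞` there is a compact HNUP set `K ⊆ ℝ`
with `dim_H K = s` and `H^s(K) = c`. -/
theorem stmt1 (s c : ℝ) (hs0 : 0 < s) (hs1 : s < 1) (hc : 0 < c) :
    ∃ K : Set ℝ, IsCompact K ∧ HNUP K ∧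
      dimH K = ENNReal.ofReal s ∧ μH[s] K = ENNReal.ofReal c := by
  classical
  obtain ⟨k, hG⟩ := HNUPAux.exists_good s hs0 hs1
  set C := HNUPAux.CSet k s with hC
  have hCc : IsCompact C := hG.isCompact_CSet
  have hm0 : μH[s] C ≠ 0 := hG.lower
  have hmtop : μH[s] C ≠ ⊤ := ne_top_of_le_ne_top ENNReal.one_ne_top hG.upper
  have hmr : 0 < (μH[s] C).toReal := ENNReal.toReal_pos hm0 hmtop
  set lam : ℝ := (2*c / (μH[s] C).toReal) ^ (1/s) with hlam
  have hlampos : 0 < lam := Real.rpow_pos_of_pos (by positivity) _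
  have hlamne : lam ≠ 0 := ne_of_gt hlampos
  have hK1c : IsCompact (lam • C) := by
    rw [← Set.image_smul]
    exact hCc.image (continuous_id.const_smul lam)
  have hlams : lam ^ s = 2*c / (μH[s] C).toReal := by
    rw [hlam, ← Real.rpow_mul (by positivity)]
    rw [show 1/s * s = 1 by field_simp]
    exact Real.rpow_one _
  have hK1m : μH[s] (lam • C) = ENNReal.ofReal (2*c) := by
    rw [MeasureTheory.Measure.hausdorffMeasure_smul₀ (le_of_lt hs0) hlamne C]
    rw [ENNReal.smul_def, smul_eq_mul]
    rw [ENNReal.coe_rpow_of_nonneg _ (le_of_lt hs0)]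
    rw [← enorm_eq_nnnorm, Real.enorm_eq_ofReal (le_of_lt hlampos)]
    rw [ENNReal.ofReal_rpow_of_pos hlampos, hlams]
    rw [ENNReal.ofReal_div_of_pos hmr, ENNReal.ofReal_toReal hmtop]
    exact ENNReal.div_mul_cancel hm0 hmtop
  obtain ⟨t0, ht0⟩ := HNUPAux.exists_Iic_measure_eq hs0 hK1c hc hK1m
  refine ⟨(lam • C) ∩ Set.Iic t0, hK1c.inter_right isClosed_Iic, ?_, ?_, ht0⟩
  · intro F hF
    exact HNUPAux.hnup_smul hG.hnup_CSet hlamne F (hF.trans Set.inter_subset_left)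
  · have hne0 : μH[s] ((lam • C) ∩ Set.Iic t0) ≠ 0 := by
      rw [ht0]
      simp only [ne_eq, ENNReal.ofReal_eq_zero, not_le]
      linarith
    have hnetop : μH[s] ((lam • C) ∩ Set.Iic t0) ≠ ⊤ := by
      rw [ht0]; exact ENNReal.ofReal_ne_top
    have hidx : ((s.toNNReal : ℝ≥0) : ℝ) = s := Real.coe_toNNReal _ (le_of_lt hs0)
    have hdim := dimH_of_hausdorffMeasure_ne_zero_ne_top (d := s.toNNReal)
      (s := (lam • C) ∩ Set.Iic t0) (by rw [hidx]; exact hne0) (by rw [hidx]; exact hnetop)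
    rw [hdim]
    rfl
end

section
/- Fix an integer m ≥ 2 and a sequence ā = (a_1, a_2, …) with 0 < a_k ≤ 1/(m+1) for all k, and let I_ā be the associated Cantor-like set. If liminf_{k→∞} a_k = 0, then I_ā is hereditarily non uniformly perfect. -/
open MeasureTheory Filter Metric

/-- `A_k = a_1 ⋯ a_k` (with `A_0 = 1`). -/
noncomputable def cantorA (a : ℕ → ℝ) (k : ℕ) : ℝ := ∏ i ∈ Finset.Icc 1 k, a i

/-- The Cantor-like set
`I_ā = { Σ_{k=1}^∞ d_k (A_{k−1} − A_k)/(m−1) : each d_k ∈ {0, 1, …, m−1} }`. -/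
noncomputable def cantorLikeSet (m : ℕ) (a : ℕ → ℝ) : Set ℝ :=
  { x | ∃ d : ℕ → ℕ, (∀ k, d k < m) ∧
      x = ∑' k : ℕ, (d (k + 1) : ℝ) * (cantorA a k - cantorA a (k + 1)) / (m - 1) }

namespace CantorHNUP

lemma A_zero (a : ℕ → ℝ) : cantorA a 0 = 1 := by simp [cantorA]

lemma A_succ (a : ℕ → ℝ) (k : ℕ) :
    cantorA a (k + 1) = cantorA a k * a (k + 1) :=
  Finset.prod_Icc_succ_top (Nat.le_add_left 1 k) _

section

variable {m : ℕ} {a : ℕ → ℝ} (hm : 2 ≤ m)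
  (ha : ∀ k : ℕ, 1 ≤ k → 0 < a k ∧ a k ≤ 1 / (m + 1))

include ha in
lemma A_pos (k : ℕ) : 0 < cantorA a k :=
  Finset.prod_pos fun i hi => (ha i (Finset.mem_Icc.mp hi).1).1

include ha in
lemma A_le_pow (k : ℕ) : cantorA a k ≤ (1 / (m + 1) : ℝ) ^ k := by
  induction k with
  | zero => simp [A_zero]
  | succ n ih =>
      rw [A_succ, pow_succ]
      have h1 := (ha (n + 1) (Nat.le_add_left 1 n)).1
      have h2 := (ha (n + 1) (Nat.le_add_left 1 n)).2
      have := A_pos ha n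
      exact mul_le_mul ih h2 h1.le (by positivity)

include hm ha in
lemma A_antitone : Antitone (cantorA a) := by
  apply antitone_nat_of_succ_le
  intro n
  rw [A_succ]
  have h1 := (ha (n + 1) (Nat.le_add_left 1 n)).1
  have h2 := (ha (n + 1) (Nat.le_add_left 1 n)).2
  have hA := A_pos ha n
  have hle : a (n + 1) ≤ 1 := by
    refine h2.trans (div_le_one_of_le₀ ?_ (by positivity))
    have hm2 : (2 : ℝ) ≤ (m : ℝ) := by exact_mod_cast hm
    linarith
  nlinarith

include hm ha in
lemma A_tendsto_zero : Tendsto (cantorA a) atTop (nhds 0) := by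
  have hlt : |(1 / ((m : ℝ) + 1))| < 1 := by
    rw [abs_of_pos (by positivity), div_lt_one (by positivity)]
    have hm2 : (2 : ℝ) ≤ (m : ℝ) := by exact_mod_cast hm
    linarith
  have hpow : Tendsto (fun k : ℕ => (1 / ((m : ℝ) + 1)) ^ k) atTop (nhds 0) :=
    tendsto_pow_atTop_nhds_zero_of_abs_lt_one hlt
  exact squeeze_zero (fun k => (A_pos ha k).le) (fun k => A_le_pow ha k) hpow

include hm ha in
lemma hasSum_tail (k : ℕ) :
    HasSum (fun n => cantorA a (n + k) - cantorA a (n + k + 1)) (cantorA a k) := by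
  have hnn : ∀ n : ℕ, 0 ≤ cantorA a (n + k) - cantorA a (n + k + 1) := fun n =>
    sub_nonneg.mpr (A_antitone hm ha (Nat.le_succ _))
  rw [hasSum_iff_tendsto_nat_of_nonneg hnn]
  have heq : ∀ n : ℕ, ∑ i ∈ Finset.range n, (cantorA a (i + k) - cantorA a (i + k + 1))
      = cantorA a k - cantorA a (n + k) := by
    intro n
    induction n with
    | zero => simp
    | succ p ih => rw [Finset.sum_range_succ, ih]; ring_nf
  simp only [heq]
  have h1 : Tendsto (fun n : ℕ => cantorA a (n + k)) atTop (nhds 0) :=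
    (A_tendsto_zero hm ha).comp (tendsto_add_atTop_nat k)
  have h2 : Tendsto (fun n : ℕ => cantorA a k - cantorA a (n + k)) atTop
      (nhds (cantorA a k - 0)) := Tendsto.sub tendsto_const_nhds h1
  simpa using h2

include hm in
lemma m_sub_one_pos : (0 : ℝ) < (m : ℝ) - 1 := by
  have : (2 : ℝ) ≤ (m : ℝ) := by exact_mod_cast hm
  linarith

include hm ha in
lemma term_abs_le (w : ℕ → ℝ) (hw : ∀ n, |w n| ≤ (m : ℝ) - 1) (k n : ℕ) :
    |w n * (cantorA a (n + k) - cantorA a (n + k + 1)) / ((m : ℝ) - 1)|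
      ≤ cantorA a (n + k) - cantorA a (n + k + 1) := by
  have hΔ : 0 ≤ cantorA a (n + k) - cantorA a (n + k + 1) :=
    sub_nonneg.mpr (A_antitone hm ha (Nat.le_succ _))
  have hm1 := m_sub_one_pos hm
  rw [abs_div, abs_mul, abs_of_nonneg hΔ, abs_of_pos hm1, div_le_iff₀ hm1]
  calc |w n| * (cantorA a (n + k) - cantorA a (n + k + 1))
      ≤ ((m : ℝ) - 1) * (cantorA a (n + k) - cantorA a (n + k + 1)) :=
        mul_le_mul_of_nonneg_right (hw n) hΔ
    _ = (cantorA a (n + k) - cantorA a (n + k + 1)) * ((m : ℝ) - 1) := by ring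

include hm ha in
lemma summable_w (w : ℕ → ℝ) (hw : ∀ n, |w n| ≤ (m : ℝ) - 1) (k : ℕ) :
    Summable (fun n => w n * (cantorA a (n + k) - cantorA a (n + k + 1)) / ((m : ℝ) - 1)) :=
  Summable.of_abs (Summable.of_nonneg_of_le (fun n => abs_nonneg _)
    (term_abs_le hm ha w hw k) (hasSum_tail hm ha k).summable)

include hm ha in
lemma abs_tsum_le (w : ℕ → ℝ) (hw : ∀ n, |w n| ≤ (m : ℝ) - 1) (k : ℕ) :
    |∑' n, w n * (cantorA a (n + k) - cantorA a (n + k + 1)) / ((m : ℝ) - 1)|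
      ≤ cantorA a k := by
  have habs : Summable
      (fun n => |w n * (cantorA a (n + k) - cantorA a (n + k + 1)) / ((m : ℝ) - 1)|) :=
    Summable.of_nonneg_of_le (fun n => abs_nonneg _) (term_abs_le hm ha w hw k)
      (hasSum_tail hm ha k).summable
  have hnorm : Summable
      (fun n => ‖w n * (cantorA a (n + k) - cantorA a (n + k + 1)) / ((m : ℝ) - 1)‖) := by
    simpa only [Real.norm_eq_abs] using habs
  have hns := norm_tsum_le_tsum_norm hnorm
  simp only [Real.norm_eq_abs] at hns
  calc |∑' n, w n * (cantorA a (n + k) - cantorA a (n + k + 1)) / ((m : ℝ) - 1)|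
      ≤ ∑' n, |w n * (cantorA a (n + k) - cantorA a (n + k + 1)) / ((m : ℝ) - 1)| := hns
    _ ≤ ∑' n, (cantorA a (n + k) - cantorA a (n + k + 1)) :=
        Summable.tsum_le_tsum (term_abs_le hm ha w hw k) habs (hasSum_tail hm ha k).summable
    _ = cantorA a k := (hasSum_tail hm ha k).tsum_eq

/-- The gap at level `i+1`. -/
noncomputable def G (m : ℕ) (a : ℕ → ℝ) (i : ℕ) : ℝ :=
  (cantorA a i - m * cantorA a (i + 1)) / ((m : ℝ) - 1)

include hm ha in
lemma G_pos (i : ℕ) : 0 < G m a i := by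
  have hA := A_pos ha i
  have h1 := (ha (i + 1) (Nat.le_add_left 1 i)).1
  have h2 := (ha (i + 1) (Nat.le_add_left 1 i)).2
  have hm1 := m_sub_one_pos hm
  have hmpos : (0 : ℝ) < (m : ℝ) + 1 := by positivity
  have hmul : a (i + 1) * ((m : ℝ) + 1) ≤ 1 := (le_div_iff₀ hmpos).mp h2
  have key : (m : ℝ) * cantorA a (i + 1) < cantorA a i := by
    rw [A_succ]
    nlinarith [mul_le_mul_of_nonneg_left hmul hA.le]
  unfold G
  have : 0 < cantorA a i - (m : ℝ) * cantorA a (i + 1) := by linarith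
  positivity

include hm ha in
lemma G_antitone {i j : ℕ} (hij : i ≤ j) : G m a j ≤ G m a i := by
  rcases eq_or_lt_of_le hij with rfl | hij
  · exact le_rfl
  have hm1 := m_sub_one_pos hm
  have hmpos : (0 : ℝ) < (m : ℝ) + 1 := by positivity
  have h1 := (ha (i + 1) (Nat.le_add_left 1 i)).1
  have h2 := (ha (i + 1) (Nat.le_add_left 1 i)).2
  have hAi := A_pos ha i
  have hAj1 : (0 : ℝ) ≤ (m : ℝ) * cantorA a (j + 1) := by
    have := A_pos ha (j + 1); positivity
  have hsucc : cantorA a (i + 1) = cantorA a i * a (i + 1) := A_succ a i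
  have hAj : cantorA a j ≤ cantorA a (i + 1) := A_antitone hm ha (Nat.succ_le_of_lt hij)
  have hmul : a (i + 1) * ((m : ℝ) + 1) ≤ 1 := (le_div_iff₀ hmpos).mp h2
  have hkey := mul_le_mul_of_nonneg_left hmul hAi.le
  rw [hsucc] at hAj
  unfold G
  rw [div_le_div_iff₀ hm1 hm1, A_succ a i]
  nlinarith [mul_le_mul_of_nonneg_right hAj hm1.le,
    mul_le_mul_of_nonneg_right hkey hm1.le, mul_nonneg hAj1 hm1.le]

include hm ha in
lemma diff_small (d e : ℕ → ℕ) (hd : ∀ n, d n < m) (he : ∀ n, e n < m) (k : ℕ)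
    (hsame : ∀ n < k, d (n + 1) = e (n + 1)) :
    |(∑' n : ℕ, (d (n + 1) : ℝ) * (cantorA a n - cantorA a (n + 1)) / ((m : ℝ) - 1))
      - (∑' n : ℕ, (e (n + 1) : ℝ) * (cantorA a n - cantorA a (n + 1)) / ((m : ℝ) - 1))|
      ≤ cantorA a k := by
  set w : ℕ → ℝ := fun n => (d (n + 1) : ℝ) - (e (n + 1) : ℝ) with hw_def
  have hbound : ∀ (f : ℕ → ℕ), (∀ n, f n < m) → ∀ n : ℕ, (f (n + 1) : ℝ) ≤ (m : ℝ) - 1 := by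
    intro f hf n
    have : (f (n + 1) : ℝ) + 1 ≤ (m : ℝ) := by exact_mod_cast hf (n + 1)
    linarith
  have hw : ∀ n, |w n| ≤ (m : ℝ) - 1 := by
    intro n
    have h1 : (d (n + 1) : ℝ) ≤ (m : ℝ) - 1 := hbound d hd n
    have h2 : (e (n + 1) : ℝ) ≤ (m : ℝ) - 1 := hbound e he n
    have h3 : (0 : ℝ) ≤ (d (n + 1) : ℝ) := Nat.cast_nonneg _
    have h4 : (0 : ℝ) ≤ (e (n + 1) : ℝ) := Nat.cast_nonneg _
    rw [abs_sub_le_iff]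
    exact ⟨by linarith, by linarith⟩
  have hSd : Summable (fun n => (d (n + 1) : ℝ) * (cantorA a n - cantorA a (n + 1)) / ((m : ℝ) - 1)) := by
    have := summable_w hm ha (fun n => (d (n + 1) : ℝ))
      (fun n => by rw [abs_of_nonneg (Nat.cast_nonneg _)]; exact hbound d hd n) 0
    simpa using this
  have hSe : Summable (fun n => (e (n + 1) : ℝ) * (cantorA a n - cantorA a (n + 1)) / ((m : ℝ) - 1)) := by
    have := summable_w hm ha (fun n => (e (n + 1) : ℝ))
      (fun n => by rw [abs_of_nonneg (Nat.cast_nonneg _)]; exact hbound e he n) 0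
    simpa using this
  have hdiff : (∑' n : ℕ, (d (n + 1) : ℝ) * (cantorA a n - cantorA a (n + 1)) / ((m : ℝ) - 1))
      - (∑' n : ℕ, (e (n + 1) : ℝ) * (cantorA a n - cantorA a (n + 1)) / ((m : ℝ) - 1))
      = ∑' n : ℕ, w n * (cantorA a n - cantorA a (n + 1)) / ((m : ℝ) - 1) := by
    rw [← Summable.tsum_sub hSd hSe]
    exact tsum_congr fun n => by simp only [hw_def]; ring
  rw [hdiff]
  have hSw : Summable (fun n => w n * (cantorA a n - cantorA a (n + 1)) / ((m : ℝ) - 1)) := by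
    have := summable_w hm ha w hw 0
    simpa using this
  have hsplit := Summable.sum_add_tsum_nat_add
    (f := fun n => w n * (cantorA a n - cantorA a (n + 1)) / ((m : ℝ) - 1)) k hSw
  have hzero : ∑ i ∈ Finset.range k, w i * (cantorA a i - cantorA a (i + 1)) / ((m : ℝ) - 1) = 0 := by
    apply Finset.sum_eq_zero
    intro i hi
    have : w i = 0 := by
      simp only [hw_def, sub_eq_zero]
      exact_mod_cast hsame i (Finset.mem_range.mp hi)
    rw [this, zero_mul, zero_div]
  rw [← hsplit, hzero, zero_add]
  exact abs_tsum_le hm ha (fun n => w (n + k)) (fun n => hw (n + k)) k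

include hm ha in
lemma diff_big (d e : ℕ → ℕ) (hd : ∀ n, d n < m) (he : ∀ n, e n < m) (i : ℕ)
    (hsame : ∀ n < i, d (n + 1) = e (n + 1)) (hlt : e (i + 1) < d (i + 1)) :
    G m a i ≤ (∑' n : ℕ, (d (n + 1) : ℝ) * (cantorA a n - cantorA a (n + 1)) / ((m : ℝ) - 1))
      - (∑' n : ℕ, (e (n + 1) : ℝ) * (cantorA a n - cantorA a (n + 1)) / ((m : ℝ) - 1)) := by
  set w : ℕ → ℝ := fun n => (d (n + 1) : ℝ) - (e (n + 1) : ℝ) with hw_def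
  have hbound : ∀ (f : ℕ → ℕ), (∀ n, f n < m) → ∀ n : ℕ, (f (n + 1) : ℝ) ≤ (m : ℝ) - 1 := by
    intro f hf n
    have : (f (n + 1) : ℝ) + 1 ≤ (m : ℝ) := by exact_mod_cast hf (n + 1)
    linarith
  have hw : ∀ n, |w n| ≤ (m : ℝ) - 1 := by
    intro n
    have h1 : (d (n + 1) : ℝ) ≤ (m : ℝ) - 1 := hbound d hd n
    have h2 : (e (n + 1) : ℝ) ≤ (m : ℝ) - 1 := hbound e he n
    have h3 : (0 : ℝ) ≤ (d (n + 1) : ℝ) := Nat.cast_nonneg _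
    have h4 : (0 : ℝ) ≤ (e (n + 1) : ℝ) := Nat.cast_nonneg _
    rw [abs_sub_le_iff]
    exact ⟨by linarith, by linarith⟩
  have hSd : Summable (fun n => (d (n + 1) : ℝ) * (cantorA a n - cantorA a (n + 1)) / ((m : ℝ) - 1)) := by
    have := summable_w hm ha (fun n => (d (n + 1) : ℝ))
      (fun n => by rw [abs_of_nonneg (Nat.cast_nonneg _)]; exact hbound d hd n) 0
    simpa using this
  have hSe : Summable (fun n => (e (n + 1) : ℝ) * (cantorA a n - cantorA a (n + 1)) / ((m : ℝ) - 1)) := by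
    have := summable_w hm ha (fun n => (e (n + 1) : ℝ))
      (fun n => by rw [abs_of_nonneg (Nat.cast_nonneg _)]; exact hbound e he n) 0
    simpa using this
  have hdiff : (∑' n : ℕ, (d (n + 1) : ℝ) * (cantorA a n - cantorA a (n + 1)) / ((m : ℝ) - 1))
      - (∑' n : ℕ, (e (n + 1) : ℝ) * (cantorA a n - cantorA a (n + 1)) / ((m : ℝ) - 1))
      = ∑' n : ℕ, w n * (cantorA a n - cantorA a (n + 1)) / ((m : ℝ) - 1) := by
    rw [← Summable.tsum_sub hSd hSe]
    exact tsum_congr fun n => by simp only [hw_def]; ring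
  rw [hdiff]
  have hSw : Summable (fun n => w n * (cantorA a n - cantorA a (n + 1)) / ((m : ℝ) - 1)) := by
    have := summable_w hm ha w hw 0
    simpa using this
  have hsplit := Summable.sum_add_tsum_nat_add
    (f := fun n => w n * (cantorA a n - cantorA a (n + 1)) / ((m : ℝ) - 1)) (i + 1) hSw
  have hzero : ∑ n ∈ Finset.range i, w n * (cantorA a n - cantorA a (n + 1)) / ((m : ℝ) - 1) = 0 := by
    apply Finset.sum_eq_zero
    intro n hn
    have : w n = 0 := by
      simp only [hw_def, sub_eq_zero]
      exact_mod_cast hsame n (Finset.mem_range.mp hn)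
    rw [this, zero_mul, zero_div]
  have hhead : ∑ n ∈ Finset.range (i + 1), w n * (cantorA a n - cantorA a (n + 1)) / ((m : ℝ) - 1)
      = w i * (cantorA a i - cantorA a (i + 1)) / ((m : ℝ) - 1) := by
    rw [Finset.sum_range_succ, hzero, zero_add]
  have htail : |∑' n : ℕ, w (n + (i + 1)) * (cantorA a (n + (i + 1)) - cantorA a (n + (i + 1) + 1))
      / ((m : ℝ) - 1)| ≤ cantorA a (i + 1) :=
    abs_tsum_le hm ha (fun n => w (n + (i + 1))) (fun n => hw (n + (i + 1))) (i + 1)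
  have hm1 := m_sub_one_pos hm
  have hΔ : 0 ≤ cantorA a i - cantorA a (i + 1) :=
    sub_nonneg.mpr (A_antitone hm ha (Nat.le_succ _))
  have hwi : (1 : ℝ) ≤ w i := by
    simp only [hw_def]
    have : (e (i + 1) : ℝ) + 1 ≤ (d (i + 1) : ℝ) := by exact_mod_cast hlt
    linarith
  have hheadge : (cantorA a i - cantorA a (i + 1)) / ((m : ℝ) - 1)
      ≤ w i * (cantorA a i - cantorA a (i + 1)) / ((m : ℝ) - 1) := by
    have hnum : (cantorA a i - cantorA a (i + 1)) ≤ w i * (cantorA a i - cantorA a (i + 1)) := by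
      nlinarith
    exact (div_le_div_iff_of_pos_right hm1).mpr hnum
  have hGi : G m a i = (cantorA a i - cantorA a (i + 1)) / ((m : ℝ) - 1) - cantorA a (i + 1) := by
    unfold G
    field_simp
    ring
  have h3 := (abs_le.mp htail).1
  rw [← hsplit, hhead]
  rw [hGi]
  linarith

include hm ha in
lemma dichotomy (x y : ℝ) (hx : x ∈ cantorLikeSet m a) (hy : y ∈ cantorLikeSet m a) (k : ℕ) :
    |x - y| ≤ cantorA a (k + 1) ∨ G m a k ≤ |x - y| := by
  obtain ⟨d, hd, rfl⟩ := hx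
  obtain ⟨e, he, rfl⟩ := hy
  by_cases hsame : ∀ n < k + 1, d (n + 1) = e (n + 1)
  · exact Or.inl (diff_small hm ha d e hd he (k + 1) hsame)
  · right
    push_neg at hsame
    obtain ⟨n₀, hn₀, hne₀⟩ := hsame
    have hP : ∃ n, d (n + 1) ≠ e (n + 1) := ⟨n₀, hne₀⟩
    classical
    let i := Nat.find hP
    have hi_min : ∀ n, n < i → d (n + 1) = e (n + 1) := fun n hn =>
      not_not.mp (Nat.find_min hP hn)
    have hik : i ≤ k := le_trans (Nat.find_le hne₀) (Nat.lt_succ_iff.mp hn₀)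
    have hi_spec : d (i + 1) ≠ e (i + 1) := Nat.find_spec hP
    have hGik : G m a k ≤ G m a i := G_antitone hm ha hik
    rcases Nat.lt_or_ge (e (i + 1)) (d (i + 1)) with hlt | hge
    · have := diff_big hm ha d e hd he i hi_min hlt
      exact hGik.trans (this.trans (le_abs_self _))
    · have hlt' : d (i + 1) < e (i + 1) := by omega
      have := diff_big hm ha e d he hd i (fun n hn => (hi_min n hn).symm) hlt'
      rw [abs_sub_comm]
      exact hGik.trans (this.trans (le_abs_self _))

include hm ha in
lemma G_le_A (i : ℕ) : G m a i ≤ cantorA a i := by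
  have hm1 := m_sub_one_pos hm
  have hAi := A_pos ha i
  have hAi1 : (0 : ℝ) ≤ (m : ℝ) * cantorA a (i + 1) := by
    have := A_pos ha (i + 1); positivity
  have hm2 : (2 : ℝ) ≤ (m : ℝ) := by exact_mod_cast hm
  unfold G
  rw [div_le_iff₀ hm1]
  nlinarith [mul_nonneg (sub_nonneg.mpr hm2) hAi.le]

end

end CantorHNUP

/-- If `liminf a_k = 0`, the Cantor-like set `I_ā` is HNUP. -/
theorem stmt4 (m : ℕ) (hm : 2 ≤ m) (a : ℕ → ℝ)
    (ha : ∀ k : ℕ, 1 ≤ k → 0 < a k ∧ a k ≤ 1 / (m + 1))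
    (hlim : Filter.liminf a Filter.atTop = 0) :
    HNUP (cantorLikeSet m a) := by
  intro F hF hUP
  obtain ⟨hcomp, hnt, c, hc, hann⟩ := hUP
  obtain ⟨u, hu, v, hv, huv⟩ := hnt
  have hdiam : 0 < Metric.diam F :=
    lt_of_lt_of_le (dist_pos.mpr huv) (Metric.dist_le_diam_of_mem hcomp.isBounded hu hv)
  have hm1 := CantorHNUP.m_sub_one_pos (m := m) hm
  have hdenom : (0 : ℝ) < (m : ℝ) - 1 + c * m := by
    have : (0 : ℝ) ≤ c * m := by positivity
    linarith
  set ε : ℝ := c / ((m : ℝ) - 1 + c * m) with hε_def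
  have hε : 0 < ε := by positivity
  -- find N such that cantorA a j < diam F for j ≥ N
  have hev : ∀ᶠ j in atTop, cantorA a j < Metric.diam F :=
    (CantorHNUP.A_tendsto_zero hm ha).eventually_lt_const hdiam
  obtain ⟨N, hN⟩ := eventually_atTop.mp hev
  -- find k ≥ N + 1 with a k < ε
  have hfreq : ∃ k ≥ N + 1, a k < ε := by
    by_contra hcon
    push_neg at hcon
    have hbd : Filter.IsBoundedUnder (· ≤ ·) atTop a :=
      isBoundedUnder_of_eventually_le (a := 1 / ((m : ℝ) + 1))
        (eventually_atTop.mpr ⟨1, fun k hk => (ha k hk).2⟩)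
    have hle : ε ≤ Filter.liminf a Filter.atTop :=
      Filter.le_liminf_of_le hbd.isCoboundedUnder_ge
        (eventually_atTop.mpr ⟨N + 1, hcon⟩)
    rw [hlim] at hle
    linarith
  obtain ⟨k, hkN, hka⟩ := hfreq
  obtain ⟨j, rfl⟩ : ∃ j, k = j + 1 := ⟨k - 1, by omega⟩
  have hjN : N ≤ j := by omega
  set r : ℝ := CantorHNUP.G m a j with hr_def
  have hr0 : 0 < r := CantorHNUP.G_pos hm ha j
  have hrdiam : r < Metric.diam F :=
    lt_of_le_of_lt (CantorHNUP.G_le_A hm ha j) (hN j hjN)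
  obtain ⟨y, hyF, h1, h2⟩ := hann u hu r hr0 hrdiam
  rw [Real.norm_eq_abs] at h1 h2
  -- key inequality : cantorA a (j+1) < c * r
  have hAj := CantorHNUP.A_pos ha j
  have ha1 := (ha (j + 1) (Nat.le_add_left 1 j)).1
  have haε : a (j + 1) * ((m : ℝ) - 1 + c * m) < c := by
    rw [hε_def, lt_div_iff₀ hdenom] at hka
    linarith
  have hkey : cantorA a (j + 1) < c * r := by
    rw [hr_def]
    unfold CantorHNUP.G
    rw [CantorHNUP.A_succ, mul_div_assoc', lt_div_iff₀ hm1]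
    nlinarith [mul_lt_mul_of_pos_left haε hAj]
  rcases CantorHNUP.dichotomy hm ha y u (hF hyF) (hF hu) j with hcase | hcase
  · linarith
  · rw [← hr_def] at hcase
    linarith
end

section
/- Fix an integer m ≥ 2 and a real number a with 0 < a ≤ 1/(m+1). Define the sequence ā = (a_1, a_2, …) by a_k = a^n if k = 2^n for some positive integer n, and a_k = a otherwise, and let I = I_ā be the associated Cantor-like set. Then I is hereditarily non uniformly perfect and dim_H I = (log m)/(−log a). -/
open MeasureTheory Filter Metric

namespace Stmt7

variable {m : ℕ} {aseq : ℕ → ℝ}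

lemma cA_zero : cantorA aseq 0 = 1 := by simp [cantorA]

lemma cA_succ (k : ℕ) : cantorA aseq (k+1) = cantorA aseq k * aseq (k+1) := by
  rw [cantorA, cantorA, Finset.prod_Icc_succ_top (Nat.le_add_left 1 k)]

section basic

variable (hb : ∀ k : ℕ, 0 < aseq (k+1) ∧ aseq (k+1) ≤ 1/(m+1))
include hb

lemma cA_pos (k : ℕ) : 0 < cantorA aseq k := by
  induction k with
  | zero => simp [cA_zero]
  | succ n ih => rw [cA_succ]; exact mul_pos ih (hb n).1

lemma cA_succ_le (k : ℕ) : (m+1) * cantorA aseq (k+1) ≤ cantorA aseq k := by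
  have h1 : (0:ℝ) < m + 1 := by positivity
  have := (hb k).2
  rw [cA_succ]
  calc (m+1) * (cantorA aseq k * aseq (k+1))
      ≤ (m+1) * (cantorA aseq k * (1/(m+1))) := by
        apply mul_le_mul_of_nonneg_left _ h1.le
        exact mul_le_mul_of_nonneg_left this (cA_pos hb k).le
    _ = cantorA aseq k := by field_simp
  
lemma cA_succ_le' (k : ℕ) : cantorA aseq (k+1) ≤ cantorA aseq k / (m+1) := by
  have h1 : (0:ℝ) < m + 1 := by positivity
  rw [le_div_iff₀ h1]; linarith [cA_succ_le hb k]

lemma cA_anti {k l : ℕ} (h : k ≤ l) : cantorA aseq l ≤ cantorA aseq k := by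
  induction l with
  | zero => simp_all
  | succ n ih =>
    rcases Nat.lt_or_ge k (n+1) with h' | h'
    · have := ih (Nat.lt_succ_iff.mp h')
      refine le_trans ?_ this
      have h1 : (0:ℝ) < m + 1 := by positivity
      nlinarith [cA_succ_le hb n, cA_pos hb (n+1)]
    · have : k = n+1 := le_antisymm h h'
      subst this; rfl

lemma cA_le_pow (k : ℕ) : cantorA aseq k ≤ (1/(m+1))^k := by
  induction k with
  | zero => simp [cA_zero]
  | succ n ih =>
    rw [cA_succ, pow_succ]
    have h1 : (0:ℝ) < 1/(m+1) := by positivity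
    exact mul_le_mul ih (hb n).2 (hb n).1.le (by positivity)

lemma cA_tendsto (hm : 2 ≤ m) : Filter.Tendsto (cantorA aseq) atTop (nhds 0) := by
  have h1 : (0:ℝ) ≤ 1/(m+1) := by positivity
  have h2 : (1:ℝ)/(m+1) < 1 := by
    rw [div_lt_one (by positivity)]
    have : (2:ℝ) ≤ m := by exact_mod_cast hm
    linarith
  have := tendsto_pow_atTop_nhds_zero_of_lt_one h1 h2
  refine squeeze_zero (fun n => (cA_pos hb n).le) (fun n => cA_le_pow hb n) this

end basic


noncomputable def cc (m : ℕ) (aseq : ℕ → ℝ) (k : ℕ) : ℝ :=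
  (cantorA aseq k - cantorA aseq (k+1)) / (m-1)

noncomputable def gp (m : ℕ) (aseq : ℕ → ℝ) (k : ℕ) : ℝ := cc m aseq k - cantorA aseq (k+1)

section geom
variable (hm : 2 ≤ m) (hb : ∀ k : ℕ, 0 < aseq (k+1) ∧ aseq (k+1) ≤ 1/(m+1))
include hm hb

lemma hm1 : (1:ℝ) ≤ (m:ℝ) - 1 := by
  have : (2:ℝ) ≤ m := by exact_mod_cast hm
  linarith

lemma cc_nonneg (k : ℕ) : 0 ≤ cc m aseq k := by
  have h1 := hm1 hm hb
  have h2 := cA_anti hb (Nat.le_succ k)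
  have : (0:ℝ) < (m:ℝ) - 1 := by linarith
  exact div_nonneg (by linarith) this.le

lemma cc_mul (k : ℕ) : ((m:ℝ)-1) * cc m aseq k = cantorA aseq k - cantorA aseq (k+1) := by
  have h1 := hm1 hm hb
  rw [cc]; field_simp

lemma gp_eq (k : ℕ) : gp m aseq k = (cantorA aseq k - (m:ℝ) * cantorA aseq (k+1)) / ((m:ℝ)-1) := by
  have h1 := hm1 hm hb
  rw [gp, cc]; field_simp; ring

lemma gp_ge (k : ℕ) : cantorA aseq k / (((m:ℝ)+1) * ((m:ℝ)-1)) ≤ gp m aseq k := by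
  have h1 := hm1 hm hb
  have h2 := cA_succ_le hb k
  have h3 := cA_pos hb k
  have h4 := cA_pos hb (k+1)
  rw [gp_eq hm hb]
  rw [div_le_div_iff₀ (by positivity) (by linarith)]
  nlinarith [mul_le_mul_of_nonneg_left h2 (show (0:ℝ) ≤ m by positivity)]

lemma gp_pos (k : ℕ) : 0 < gp m aseq k := by
  have := gp_ge hm hb k
  have h1 := hm1 hm hb
  have h3 := cA_pos hb k
  have : 0 < cantorA aseq k / (((m:ℝ)+1) * ((m:ℝ)-1)) := by positivity
  linarith [gp_ge hm hb k]

lemma gp_le (k : ℕ) : gp m aseq k ≤ cantorA aseq k := by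
  have h1 := hm1 hm hb
  have h4 := cA_pos hb (k+1)
  have h5 : (0:ℝ) < (m:ℝ) - 1 := by linarith
  rw [gp_eq hm hb, div_le_iff₀ h5]
  have : (2:ℝ) ≤ (m:ℝ) := by exact_mod_cast hm
  nlinarith [cA_pos hb k]

lemma gp_anti {j l : ℕ} (h : j ≤ l) : gp m aseq l ≤ gp m aseq j := by
  rcases Nat.eq_or_lt_of_le h with rfl | h'
  · exact le_refl _
  · have h1 := hm1 hm hb
    have h5 : (0:ℝ) < (m:ℝ) - 1 := by linarith
    have hA : cantorA aseq l ≤ cantorA aseq (j+1) := cA_anti hb h'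
    have hgl : gp m aseq l ≤ cantorA aseq l / ((m:ℝ)-1) := by
      rw [gp_eq hm hb, div_le_div_iff₀ h5 h5]
      nlinarith [mul_pos (show (0:ℝ) < m by positivity) (cA_pos hb (l+1))]
    have h2 : cantorA aseq (j+1) / ((m:ℝ)-1) ≤ gp m aseq j := by
      rw [gp_eq hm hb, div_le_div_iff₀ h5 h5]
      nlinarith [cA_succ_le hb j, cA_pos hb (j+1)]
    have h3 : cantorA aseq l / ((m:ℝ)-1) ≤ cantorA aseq (j+1) / ((m:ℝ)-1) := by
      gcongr
    linarith
end geom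

section series
variable (hm : 2 ≤ m) (hb : ∀ k : ℕ, 0 < aseq (k+1) ∧ aseq (k+1) ≤ 1/(m+1))
include hm hb

lemma term_nonneg (d : ℕ → ℕ) (k : ℕ) : 0 ≤ (d (k+1) : ℝ) * cc m aseq k :=
  mul_nonneg (Nat.cast_nonneg _) (cc_nonneg hm hb k)

lemma term_le (d : ℕ → ℕ) (hd : ∀ k, d k < m) (k : ℕ) :
    (d (k+1) : ℝ) * cc m aseq k ≤ ((m:ℝ)-1) * cc m aseq k := by
  apply mul_le_mul_of_nonneg_right _ (cc_nonneg hm hb k)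
  have h := hd (k+1)
  have : (d (k+1) : ℝ) + 1 ≤ (m:ℝ) := by exact_mod_cast Nat.succ_le_of_lt h
  linarith

lemma cc_le_pow (k : ℕ) : cc m aseq k ≤ (1/((m:ℝ)+1))^k := by
  have h1 := hm1 hm hb
  have h2 := cA_anti hb (Nat.le_succ k)
  have h3 := cA_pos hb (k+1)
  have h4 := cA_le_pow hb k
  rw [cc]
  calc (cantorA aseq k - cantorA aseq (k+1)) / ((m:ℝ)-1)
      ≤ (cantorA aseq k - cantorA aseq (k+1)) / 1 := by
        apply div_le_div_of_nonneg_left (by linarith) (by linarith) h1 |>.trans_eq rfl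
    _ = cantorA aseq k - cantorA aseq (k+1) := div_one _
    _ ≤ cantorA aseq k := by linarith
    _ ≤ (1/((m:ℝ)+1))^k := h4

lemma summable_cc : Summable (cc m aseq) := by
  refine Summable.of_nonneg_of_le (cc_nonneg hm hb) (cc_le_pow hm hb) ?_
  apply summable_geometric_of_lt_one (by positivity)
  rw [div_lt_one (by positivity)]
  have : (2:ℝ) ≤ m := by exact_mod_cast hm
  linarith

lemma summable_term (d : ℕ → ℕ) (hd : ∀ k, d k < m) :
    Summable (fun k => (d (k+1):ℝ) * cc m aseq k) :=
  Summable.of_nonneg_of_le (term_nonneg hm hb d) (term_le hm hb d hd)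
    ((summable_cc hm hb).mul_left _)

lemma hasSum_tail (K : ℕ) :
    HasSum (fun k => cantorA aseq (k+K) - cantorA aseq (k+K+1)) (cantorA aseq K) := by
  have hnn : ∀ k : ℕ, 0 ≤ cantorA aseq (k+K) - cantorA aseq (k+K+1) := by
    intro k; have := cA_anti hb (Nat.le_succ (k+K)); linarith
  rw [hasSum_iff_tendsto_nat_of_nonneg hnn]
  have key : ∀ n, ∑ i ∈ Finset.range n, (cantorA aseq (i+K) - cantorA aseq (i+K+1))
      = cantorA aseq K - cantorA aseq (n+K) := by
    intro n
    have := Finset.sum_range_sub' (fun i => cantorA aseq (i+K)) n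
    simp only [Nat.zero_add] at this
    rw [← this]
    exact Finset.sum_congr rfl fun i _ => by rw [show i+K+1 = i+1+K from by omega]
  simp only [key]
  have h0 : Filter.Tendsto (fun n : ℕ => cantorA aseq (n+K)) atTop (nhds 0) :=
    (cA_tendsto hb hm).comp (tendsto_add_atTop_nat K)
  simpa using (tendsto_const_nhds (x := cantorA aseq K)).sub h0

lemma hasSum_tail' (K : ℕ) :
    HasSum (fun k => ((m:ℝ)-1) * cc m aseq (k+K)) (cantorA aseq K) := by
  have : (fun k => ((m:ℝ)-1) * cc m aseq (k+K))
      = fun k => cantorA aseq (k+K) - cantorA aseq (k+K+1) := by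
    funext k; exact cc_mul hm hb (k+K)
  rw [this]; exact hasSum_tail hm hb K

lemma summable_tail (d : ℕ → ℕ) (hd : ∀ k, d k < m) (K : ℕ) :
    Summable (fun k => (d (k+K+1):ℝ) * cc m aseq (k+K)) := by
  have := (summable_nat_add_iff (f := fun k => (d (k+1):ℝ) * cc m aseq k) K).2
    (summable_term hm hb d hd)
  exact this

lemma tsum_tail_nonneg (d : ℕ → ℕ) (K : ℕ) :
    0 ≤ ∑' k, (d (k+K+1):ℝ) * cc m aseq (k+K) :=
  tsum_nonneg fun k => mul_nonneg (Nat.cast_nonneg _) (cc_nonneg hm hb (k+K))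

lemma tsum_tail_le (d : ℕ → ℕ) (hd : ∀ k, d k < m) (K : ℕ) :
    ∑' k, (d (k+K+1):ℝ) * cc m aseq (k+K) ≤ cantorA aseq K := by
  have h := hasSum_tail' hm hb K
  calc ∑' k, (d (k+K+1):ℝ) * cc m aseq (k+K)
      ≤ ∑' k, ((m:ℝ)-1) * cc m aseq (k+K) :=
        Summable.tsum_le_tsum (fun k => term_le hm hb d hd (k+K)) (summable_tail hm hb d hd K) h.summable
    _ = cantorA aseq K := h.tsum_eq

end series

noncomputable def val (m : ℕ) (aseq : ℕ → ℝ) (d : ℕ → ℕ) : ℝ :=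
  ∑' k, (d (k+1):ℝ) * cc m aseq k

lemma val_eq_form (d : ℕ → ℕ) :
    (∑' k, (d (k + 1) : ℝ) * (cantorA aseq k - cantorA aseq (k + 1)) / ((m:ℝ) - 1))
      = val m aseq d :=
  tsum_congr fun k => mul_div_assoc _ _ _

section vals
variable (hm : 2 ≤ m) (hb : ∀ k : ℕ, 0 < aseq (k+1) ∧ aseq (k+1) ≤ 1/(m+1))
include hm hb

lemma val_split (d : ℕ → ℕ) (hd : ∀ k, d k < m) (K : ℕ) :
    val m aseq d = (∑ k ∈ Finset.range K, (d (k+1):ℝ) * cc m aseq k)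
      + ∑' k, (d (k+K+1):ℝ) * cc m aseq (k+K) :=
  (Summable.sum_add_tsum_nat_add K (summable_term hm hb d hd)).symm

lemma val_nonneg (d : ℕ → ℕ) (hd : ∀ k, d k < m) : 0 ≤ val m aseq d := by
  have := tsum_tail_nonneg hm hb d 0
  simpa [val] using this

lemma val_le_one (d : ℕ → ℕ) (hd : ∀ k, d k < m) : val m aseq d ≤ 1 := by
  have h := tsum_tail_le hm hb d hd 0
  simp only [Nat.add_zero] at h
  calc val m aseq d = ∑' k, (d (k+0+1):ℝ) * cc m aseq (k+0) := by simp [val]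
    _ ≤ cantorA aseq 0 := tsum_tail_le hm hb d hd 0
    _ = 1 := cA_zero

lemma prefix_close (d e : ℕ → ℕ) (hd : ∀ k, d k < m) (he : ∀ k, e k < m) (K : ℕ)
    (hag : ∀ i, 1 ≤ i → i ≤ K → d i = e i) :
    |val m aseq d - val m aseq e| ≤ cantorA aseq K := by
  have hsd := val_split hm hb d hd K
  have hse := val_split hm hb e he K
  have hpre : (∑ k ∈ Finset.range K, (d (k+1):ℝ) * cc m aseq k)
      = ∑ k ∈ Finset.range K, (e (k+1):ℝ) * cc m aseq k := by
    refine Finset.sum_congr rfl fun k hk => ?_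
    have hk' := Finset.mem_range.mp hk
    rw [hag (k+1) (by omega) (by omega)]
  have h1 := tsum_tail_nonneg hm hb d K
  have h2 := tsum_tail_nonneg hm hb e K
  have h3 := tsum_tail_le hm hb d hd K
  have h4 := tsum_tail_le hm hb e he K
  rw [hsd, hse, hpre]
  rw [abs_le]
  constructor <;> [linarith; linarith]

lemma first_diff (d e : ℕ → ℕ) (hd : ∀ k, d k < m) (he : ∀ k, e k < m) (K : ℕ)
    (hag : ∀ i, 1 ≤ i → i ≤ K → d i = e i) (hne : d (K+1) ≠ e (K+1)) :
    gp m aseq K ≤ |val m aseq d - val m aseq e| := by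
  have hsd := val_split hm hb d hd (K+1)
  have hse := val_split hm hb e he (K+1)
  have hpre : (∑ k ∈ Finset.range K, (d (k+1):ℝ) * cc m aseq k)
      = ∑ k ∈ Finset.range K, (e (k+1):ℝ) * cc m aseq k := by
    refine Finset.sum_congr rfl fun k hk => ?_
    have hk' := Finset.mem_range.mp hk
    rw [hag (k+1) (by omega) (by omega)]
  rw [Finset.sum_range_succ] at hsd hse
  set Td := ∑' k, (d (k+(K+1)+1):ℝ) * cc m aseq (k+(K+1)) with hTd
  set Te := ∑' k, (e (k+(K+1)+1):ℝ) * cc m aseq (k+(K+1)) with hTe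
  have h1 := tsum_tail_nonneg hm hb d (K+1)
  have h2 := tsum_tail_nonneg hm hb e (K+1)
  have h3 := tsum_tail_le hm hb d hd (K+1)
  have h4 := tsum_tail_le hm hb e he (K+1)
  rw [← hTd] at h1 h3
  rw [← hTe] at h2 h4
  have hΔ : (1:ℝ) ≤ |(d (K+1):ℝ) - (e (K+1):ℝ)| := by
    have : d (K+1) ≠ e (K+1) := hne
    rcases Nat.lt_or_ge (d (K+1)) (e (K+1)) with h | h
    · rw [abs_sub_comm, abs_of_nonneg (by
        have : (d (K+1):ℝ) ≤ e (K+1) := by exact_mod_cast h.le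
        linarith)]
      have : (d (K+1):ℝ) + 1 ≤ e (K+1) := by exact_mod_cast h
      linarith
    · have hlt : e (K+1) < d (K+1) := lt_of_le_of_ne h (Ne.symm this)
      rw [abs_of_nonneg (by
        have : (e (K+1):ℝ) ≤ d (K+1) := by exact_mod_cast h
        linarith)]
      have : (e (K+1):ℝ) + 1 ≤ d (K+1) := by exact_mod_cast hlt
      linarith
  have hcc := cc_nonneg hm hb K
  have key : val m aseq d - val m aseq e
      = ((d (K+1):ℝ) - (e (K+1):ℝ)) * cc m aseq K + (Td - Te) := by
    rw [hsd, hse, hpre]; ring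
  have habs1 : |((d (K+1):ℝ) - (e (K+1):ℝ)) * cc m aseq K| ≥ cc m aseq K := by
    rw [abs_mul, abs_of_nonneg hcc]
    nlinarith
  have habs2 : |Td - Te| ≤ cantorA aseq (K+1) := by
    rw [abs_le]; constructor <;> linarith
  have : |val m aseq d - val m aseq e|
      ≥ |((d (K+1):ℝ) - (e (K+1):ℝ)) * cc m aseq K| - |Td - Te| := by
    rw [key]
    have := abs_add_le (((d (K+1):ℝ) - (e (K+1):ℝ)) * cc m aseq K + (Td - Te)) (-(Td - Te))
    simp only [add_neg_cancel_right, abs_neg] at this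
    linarith
  have hgp : gp m aseq K = cc m aseq K - cantorA aseq (K+1) := rfl
  linarith

lemma close_agree (d e : ℕ → ℕ) (hd : ∀ k, d k < m) (he : ∀ k, e k < m) (K : ℕ)
    (hlt : |val m aseq d - val m aseq e| < gp m aseq K) :
    ∀ i, 1 ≤ i → i ≤ K+1 → d i = e i := by
  by_contra hcon
  push_neg at hcon
  have hex : ∃ p, 1 ≤ p ∧ p ≤ K+1 ∧ d p ≠ e p := by
    obtain ⟨i, h1, h2, h3⟩ := hcon
    exact ⟨i, h1, h2, h3⟩
  classical
  obtain ⟨p, hp1, hp2, hp3⟩ := hex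
  -- take least such p
  have : ∃ p, (1 ≤ p ∧ p ≤ K+1 ∧ d p ≠ e p) := ⟨p, hp1, hp2, hp3⟩
  let q := Nat.find this
  obtain ⟨hq1, hq2, hq3⟩ := Nat.find_spec this
  have hqmin := fun r (hr : r < q) => Nat.find_min this hr
  obtain ⟨K', hK'⟩ : ∃ K', q = K' + 1 := ⟨q - 1, by omega⟩
  have hag : ∀ i, 1 ≤ i → i ≤ K' → d i = e i := by
    intro i hi1 hi2
    by_contra hne
    exact hqmin i (by omega) ⟨hi1, by omega, hne⟩
  have := first_diff hm hb d e hd he K' hag (hK' ▸ hq3)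
  have hmono : gp m aseq K ≤ gp m aseq K' := gp_anti hm hb (by omega)
  linarith

end vals

lemma mem_cls_iff {x : ℝ} :
    x ∈ cantorLikeSet m aseq ↔ ∃ d : ℕ → ℕ, (∀ k, d k < m) ∧ x = val m aseq d := by
  constructor
  · rintro ⟨d, hd, rfl⟩
    exact ⟨d, hd, val_eq_form d⟩
  · rintro ⟨d, hd, rfl⟩
    exact ⟨d, hd, (val_eq_form d).symm⟩

section hnup
variable (hm : 2 ≤ m) {a : ℝ} (ha0 : 0 < a) (ha1 : a ≤ 1 / (m + 1))
  (hb : ∀ k : ℕ, 0 < aseq (k+1) ∧ aseq (k+1) ≤ 1/(m+1))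
  (h1 : ∀ n : ℕ, 1 ≤ n → aseq (2 ^ n) = a ^ n)
include hm ha0 ha1 hb h1

omit ha0 hb h1 in
lemma ha_lt_one : a < 1 := by
  have h2 : (2:ℝ) ≤ m := by exact_mod_cast hm
  have : (1:ℝ)/(m+1) < 1 := by
    rw [div_lt_one (by linarith)]; linarith
  linarith

theorem hnup_cls : HNUP (cantorLikeSet m aseq) := by
  intro F hF hUP
  obtain ⟨hcomp, hnt, c, hc, hann⟩ := hUP
  obtain ⟨x0, hx0, y0, hy0, hxy0⟩ := hnt
  have hbd : Bornology.IsBounded F := hcomp.isBounded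
  have hdiam_pos : 0 < diam F :=
    lt_of_lt_of_le (dist_pos.2 hxy0) (dist_le_diam_of_mem hbd hx0 hy0)
  set c' := min c (1/2) with hc'
  have hc'0 : 0 < c' := lt_min hc (by norm_num)
  have hann' : ∀ p ∈ F, ∀ r : ℝ, 0 < r → r < Metric.diam F →
      ∃ y ∈ F, c' * r < ‖y - p‖ ∧ ‖y - p‖ < r := by
    intro p hp r hr hrd
    obtain ⟨y, hyF, hy1, hy2⟩ := hann p hp r hr hrd
    refine ⟨y, hyF, lt_of_le_of_lt ?_ hy1, hy2⟩
    exact mul_le_mul_of_nonneg_right (min_le_left _ _) hr.le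
  -- choose n
  have hb1 : (0:ℝ) < 1/((m:ℝ)+1) := by positivity
  have hb2 : (1:ℝ)/((m:ℝ)+1) < 1 := by
    rw [div_lt_one (by positivity)]
    have : (2:ℝ) ≤ m := by exact_mod_cast hm
    linarith
  have hev1 : ∀ᶠ n : ℕ in atTop, a^n * ((m:ℝ)-1+c'*m) < c' := by
    have ht : Filter.Tendsto (fun n : ℕ => a^n * ((m:ℝ)-1+c'*m)) atTop (nhds (0 * ((m:ℝ)-1+c'*m))) :=
      (tendsto_pow_atTop_nhds_zero_of_lt_one ha0.le (ha_lt_one hm ha1)).mul_const _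
    rw [zero_mul] at ht
    exact ht.eventually_lt_const hc'0
  have hev2 : ∀ᶠ n : ℕ in atTop, gp m aseq (2^n - 1) < diam F := by
    have ht : Filter.Tendsto (fun n : ℕ => (1/((m:ℝ)+1))^n) atTop (nhds 0) :=
      tendsto_pow_atTop_nhds_zero_of_lt_one hb1.le hb2
    filter_upwards [ht.eventually_lt_const hdiam_pos] with n hn
    refine lt_of_le_of_lt ?_ hn
    calc gp m aseq (2^n - 1) ≤ cantorA aseq (2^n - 1) := gp_le hm hb _
      _ ≤ (1/((m:ℝ)+1))^(2^n - 1) := cA_le_pow hb _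
      _ ≤ (1/((m:ℝ)+1))^n := by
          apply pow_le_pow_of_le_one hb1.le hb2.le
          have := Nat.lt_two_pow_self (n := n)
          omega
  obtain ⟨n, hn1, hn2, hn3⟩ : ∃ n : ℕ, 1 ≤ n ∧ (a^n * ((m:ℝ)-1+c'*m) < c')
      ∧ gp m aseq (2^n - 1) < diam F := by
    obtain ⟨n, hn⟩ := ((eventually_ge_atTop 1).and (hev1.and hev2)).exists
    exact ⟨n, hn.1, hn.2.1, hn.2.2⟩
  set j := 2^n - 1 with hj
  have hj1 : j + 1 = 2^n := by
    have := Nat.one_le_two_pow (n := n); omega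
  -- key: A (j+1) < c' * gp j
  have hAK : cantorA aseq (j+1) = cantorA aseq j * a^n := by
    rw [cA_succ, hj1, h1 n hn1]
  have hgpj : gp m aseq j = (cantorA aseq j - (m:ℝ) * cantorA aseq (j+1)) / ((m:ℝ)-1) :=
    gp_eq hm hb j
  have hm1' : (1:ℝ) ≤ (m:ℝ) - 1 := hm1 hm hb
  have hAj := cA_pos hb j
  have hkey : cantorA aseq (j+1) < c' * gp m aseq j := by
    rw [hgpj, hAK, mul_div_assoc', lt_div_iff₀ (by linarith : (0:ℝ) < (m:ℝ)-1)]
    nlinarith [mul_lt_mul_of_pos_left hn2 hAj]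
  have hr0 : 0 < gp m aseq j := gp_pos hm hb j
  obtain ⟨y, hyF, hy1, hy2⟩ := hann' x0 hx0 (gp m aseq j) hr0 hn3
  obtain ⟨d, hd, hxd⟩ := mem_cls_iff.mp (hF hx0)
  obtain ⟨e, he, hye⟩ := mem_cls_iff.mp (hF hyF)
  rw [Real.norm_eq_abs, hxd, hye] at hy1 hy2
  have hagree : ∀ i, 1 ≤ i → i ≤ j+1 → e i = d i :=
    close_agree hm hb e d he hd j hy2
  have hclose : |val m aseq e - val m aseq d| ≤ cantorA aseq (j+1) :=
    prefix_close hm hb e d he hd (j+1) hagree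
  linarith [hy1, hkey, hclose]
end hnup

noncomputable def lep (m : ℕ) (aseq : ℕ → ℝ) (n : ℕ) (w : Fin n → Fin m) : ℝ :=
  ∑ i : Fin n, (w i : ℝ) * cc m aseq (i : ℕ)

section upper
variable (hm : 2 ≤ m) (hb : ∀ k : ℕ, 0 < aseq (k+1) ∧ aseq (k+1) ≤ 1/(m+1))
  {a : ℝ} (ha0 : 0 < a) (hba : ∀ k : ℕ, aseq (k+1) ≤ a)
include hm hb

omit hm hb in
include ha0 hba in
lemma cA_le_pow_a (hb : ∀ k : ℕ, 0 < aseq (k+1) ∧ aseq (k+1) ≤ 1/(m+1)) (k : ℕ) :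
    cantorA aseq k ≤ a^k := by
  induction k with
  | zero => simp [cA_zero]
  | succ n ih =>
    rw [cA_succ, pow_succ]
    exact mul_le_mul ih (hba n) (hb n).1.le (by positivity)

lemma cls_cover (n : ℕ) : cantorLikeSet m aseq ⊆
    ⋃ w : Fin n → Fin m, Set.Icc (lep m aseq n w) (lep m aseq n w + cantorA aseq n) := by
  intro x hx
  obtain ⟨d, hd, rfl⟩ := (mem_cls_iff (m := m) (aseq := aseq)).mp hx
  refine Set.mem_iUnion.mpr ⟨fun i => ⟨d (i+1), hd _⟩, ?_⟩
  have hsplit := val_split hm hb d hd n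
  have hlep : lep m aseq n (fun i => (⟨d (i+1), hd _⟩ : Fin m))
      = ∑ k ∈ Finset.range n, (d (k+1):ℝ) * cc m aseq k := by
    rw [lep, Fin.sum_univ_eq_sum_range (fun k => (d (k+1):ℝ) * cc m aseq k) n]
  have h1 := tsum_tail_nonneg hm hb d n
  have h2 := tsum_tail_le hm hb d hd n
  constructor
  · rw [hlep, hsplit]; linarith
  · rw [hlep, hsplit]; linarith

include ha0 hba in
lemma hausdorff_d_zero (halt : a < 1) (d : NNReal)
    (hd : Real.log m / (-Real.log a) < (d:ℝ)) :
    μH[(d:ℝ)] (cantorLikeSet m aseq) = 0 := by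
  have hq0 : (0:ℝ) < a ^ ((d:ℝ)) := Real.rpow_pos_of_pos ha0 _
  set q : ℝ := (m:ℝ) * a ^ ((d:ℝ)) with hqdef
  have hm0 : (0:ℝ) < m := by positivity
  have hq_pos : 0 < q := by positivity
  have hla : Real.log a < 0 := Real.log_neg ha0 halt
  have hq1 : q < 1 := by
    have hlogq : Real.log q = Real.log m + (d:ℝ) * Real.log a := by
      rw [hqdef, Real.log_mul (by positivity) (by positivity), Real.log_rpow ha0]
    have : Real.log m < (d:ℝ) * (-Real.log a) := by
      rw [div_lt_iff₀ (by linarith)] at hd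
      linarith [hd]
    have hlq : Real.log q < 0 := by rw [hlogq]; linarith
    have := Real.exp_log hq_pos
    calc q = Real.exp (Real.log q) := (Real.exp_log hq_pos).symm
      _ < Real.exp 0 := Real.exp_lt_exp.mpr hlq
      _ = 1 := Real.exp_zero
  -- the cover bound
  have hcover := MeasureTheory.Measure.hausdorffMeasure_le_liminf_sum (d:ℝ) (cantorLikeSet m aseq)
    (fun n : ℕ => ENNReal.ofReal (a^n))
    (by
      rw [show (0:ENNReal) = ENNReal.ofReal 0 by simp]
      exact ENNReal.tendsto_ofReal (tendsto_pow_atTop_nhds_zero_of_lt_one ha0.le halt))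
    (fun n (w : Fin n → Fin m) => Set.Icc (lep m aseq n w) (lep m aseq n w + cantorA aseq n))
    (by
      filter_upwards with n
      intro w
      rw [Real.ediam_Icc, add_sub_cancel_left]
      exact ENNReal.ofReal_le_ofReal (cA_le_pow_a ha0 hba hb n))
    (by filter_upwards with n using cls_cover hm hb n)
  -- compute the sums and show tendsto 0
  have hsum : ∀ n : ℕ, (∑ w : Fin n → Fin m,
      EMetric.diam (Set.Icc (lep m aseq n w) (lep m aseq n w + cantorA aseq n)) ^ (d:ℝ))
      ≤ ENNReal.ofReal (q^n) := by
    intro n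
    have hdiam : ∀ w : Fin n → Fin m,
        EMetric.diam (Set.Icc (lep m aseq n w) (lep m aseq n w + cantorA aseq n)) ^ (d:ℝ)
          = ENNReal.ofReal ((cantorA aseq n) ^ ((d:ℝ))) := by
      intro w
      rw [EMetric.diam, Real.ediam_Icc, add_sub_cancel_left, ← ENNReal.ofReal_rpow_of_pos (cA_pos hb n)]
    calc (∑ w : Fin n → Fin m, EMetric.diam
          (Set.Icc (lep m aseq n w) (lep m aseq n w + cantorA aseq n)) ^ (d:ℝ))
        = ∑ _w : Fin n → Fin m, ENNReal.ofReal ((cantorA aseq n) ^ ((d:ℝ))) :=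
          Finset.sum_congr rfl fun w _ => hdiam w
      _ = (Fintype.card (Fin n → Fin m)) • ENNReal.ofReal ((cantorA aseq n) ^ ((d:ℝ))) := by
          rw [Finset.sum_const, Finset.card_univ]
      _ = (m^n : ℕ) • ENNReal.ofReal ((cantorA aseq n) ^ ((d:ℝ))) := by
          rw [Fintype.card_fun, Fintype.card_fin, Fintype.card_fin]
      _ = ENNReal.ofReal ((m:ℝ)^n * (cantorA aseq n) ^ ((d:ℝ))) := by
          rw [nsmul_eq_mul]
          rw [show ((m^n : ℕ) : ENNReal) = ENNReal.ofReal ((m:ℝ)^n) by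
            rw [← ENNReal.ofReal_natCast (m^n)]; push_cast; ring_nf]
          rw [← ENNReal.ofReal_mul (by positivity)]
      _ ≤ ENNReal.ofReal (q^n) := by
          apply ENNReal.ofReal_le_ofReal
          have h1 : (cantorA aseq n) ^ ((d:ℝ)) ≤ (a^n) ^ ((d:ℝ)) :=
            Real.rpow_le_rpow (cA_pos hb n).le (cA_le_pow_a ha0 hba hb n) (by positivity)
          have h2 : ((a:ℝ)^n) ^ ((d:ℝ)) = (a ^ ((d:ℝ)))^n := by
            rw [← Real.rpow_natCast a n, ← Real.rpow_mul ha0.le, mul_comm,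
              Real.rpow_mul ha0.le, Real.rpow_natCast]
          rw [hqdef, mul_pow]
          have h3 : (0:ℝ) ≤ (m:ℝ)^n := by positivity
          calc (m:ℝ)^n * (cantorA aseq n) ^ ((d:ℝ))
              ≤ (m:ℝ)^n * ((a:ℝ)^n) ^ ((d:ℝ)) := by
                exact mul_le_mul_of_nonneg_left h1 h3
            _ = (m:ℝ)^n * (a ^ ((d:ℝ)))^n := by rw [h2]
  have htend : Filter.Tendsto (fun n : ℕ => (∑ w : Fin n → Fin m,
      EMetric.diam (Set.Icc (lep m aseq n w) (lep m aseq n w + cantorA aseq n)) ^ (d:ℝ)))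
      atTop (nhds 0) := by
    have h0 : Filter.Tendsto (fun n : ℕ => ENNReal.ofReal (q^n)) atTop (nhds 0) := by
      rw [show (0:ENNReal) = ENNReal.ofReal 0 by simp]
      exact ENNReal.tendsto_ofReal (tendsto_pow_atTop_nhds_zero_of_lt_one hq_pos.le hq1)
    exact tendsto_of_tendsto_of_tendsto_of_le_of_le tendsto_const_nhds h0
      (fun n => zero_le) hsum
  have : μH[(d:ℝ)] (cantorLikeSet m aseq) ≤ 0 := by
    calc μH[(d:ℝ)] (cantorLikeSet m aseq) ≤ _ := hcover
      _ = 0 := htend.liminf_eq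
  exact le_antisymm this zero_le

end upper

def wexp : ℕ → ℕ := fun i => if 2 ≤ i ∧ 2^(Nat.log 2 i) = i then Nat.log 2 i else 1

lemma wexp_pow {n : ℕ} (hn : 1 ≤ n) : wexp (2^n) = n := by
  have h2 : 2 ≤ 2^n := by
    calc 2 = 2^1 := rfl
      _ ≤ 2^n := Nat.pow_le_pow_right (by norm_num) hn
  have hl : Nat.log 2 (2^n) = n := Nat.log_pow (by norm_num) n
  rw [wexp, hl, if_pos ⟨h2, rfl⟩]

lemma one_le_wexp (i : ℕ) : 1 ≤ wexp i := by
  rw [wexp]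
  split
  · next h => exact Nat.log_pos (by norm_num) h.1
  · exact le_refl 1

def Eexp (K : ℕ) : ℕ := ∑ i ∈ Finset.Icc 1 K, wexp i

lemma le_Eexp (K : ℕ) : K ≤ Eexp K := by
  have h := Finset.card_nsmul_le_sum (Finset.Icc 1 K) wexp 1 (fun i _ => one_le_wexp i)
  rwa [Nat.card_Icc, smul_eq_mul, mul_one, Nat.add_sub_cancel] at h

lemma Eexp_le (K : ℕ) : Eexp K ≤ K + (Nat.log 2 K) * (Nat.log 2 K) := by
  classical
  set N := Nat.log 2 K with hN
  rw [Eexp, ← Finset.sum_filter_add_sum_filter_not (Finset.Icc 1 K)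
    (fun i => 2 ≤ i ∧ 2^(Nat.log 2 i) = i) wexp]
  have hnot : ∑ i ∈ (Finset.Icc 1 K).filter (fun i => ¬(2 ≤ i ∧ 2^(Nat.log 2 i) = i)), wexp i
      ≤ K := by
    calc ∑ i ∈ (Finset.Icc 1 K).filter (fun i => ¬(2 ≤ i ∧ 2^(Nat.log 2 i) = i)), wexp i
        = ∑ _i ∈ (Finset.Icc 1 K).filter (fun i => ¬(2 ≤ i ∧ 2^(Nat.log 2 i) = i)), 1 :=
          Finset.sum_congr rfl fun i hi => by
            rw [wexp, if_neg (Finset.mem_filter.mp hi).2]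
      _ = ((Finset.Icc 1 K).filter (fun i => ¬(2 ≤ i ∧ 2^(Nat.log 2 i) = i))).card := by
          simp
      _ ≤ (Finset.Icc 1 K).card := Finset.card_le_card (Finset.filter_subset _ _)
      _ = K := by rw [Nat.card_Icc, Nat.add_sub_cancel]
  have hpow : ∑ i ∈ (Finset.Icc 1 K).filter (fun i => (2 ≤ i ∧ 2^(Nat.log 2 i) = i)), wexp i
      ≤ N * N := by
    have hsub : (Finset.Icc 1 K).filter (fun i => (2 ≤ i ∧ 2^(Nat.log 2 i) = i))
        ⊆ (Finset.Icc 1 N).image (2 ^ ·) := by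
      intro i hi
      obtain ⟨hmem, h2i, hli⟩ := Finset.mem_filter.mp hi
      refine Finset.mem_image.mpr ⟨Nat.log 2 i, Finset.mem_Icc.mpr ⟨?_, ?_⟩, hli⟩
      · exact Nat.log_pos (by norm_num) h2i
      · exact hN ▸ Nat.log_mono_right (Finset.mem_Icc.mp hmem).2
    calc ∑ i ∈ (Finset.Icc 1 K).filter (fun i => (2 ≤ i ∧ 2^(Nat.log 2 i) = i)), wexp i
        ≤ ∑ i ∈ (Finset.Icc 1 N).image (2 ^ ·), wexp i :=
          Finset.sum_le_sum_of_subset hsub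
      _ = ∑ n ∈ Finset.Icc 1 N, wexp (2^n) :=
          Finset.sum_image (fun x _ y _ h => Nat.pow_right_injective (le_refl 2) h)
      _ ≤ ∑ _n ∈ Finset.Icc 1 N, N := Finset.sum_le_sum fun n hn => by
          rw [wexp_pow (Finset.mem_Icc.mp hn).1]; exact (Finset.mem_Icc.mp hn).2
      _ = N * N := by rw [Finset.sum_const, Nat.card_Icc, Nat.add_sub_cancel, smul_eq_mul]
  omega

section lowerprep
variable (hm : 2 ≤ m) (hb : ∀ k : ℕ, 0 < aseq (k+1) ∧ aseq (k+1) ≤ 1/(m+1))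
  {a : ℝ} (ha0 : 0 < a) (halt : a < 1)
  (h1 : ∀ n : ℕ, 1 ≤ n → aseq (2 ^ n) = a ^ n)
  (h2 : ∀ k : ℕ, ¬(∃ n : ℕ, 1 ≤ n ∧ k = 2 ^ n) → aseq k = a)

include h1 h2 in
lemma aseq_eq_pow (i : ℕ) (hi : 1 ≤ i) : aseq i = a ^ wexp i := by
  by_cases hp : ∃ n : ℕ, 1 ≤ n ∧ i = 2^n
  · obtain ⟨n, hn, rfl⟩ := hp
    rw [h1 n hn, wexp_pow hn]
  · rw [h2 i hp, wexp, if_neg, pow_one]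
    rintro ⟨hi2, hlog⟩
    exact hp ⟨Nat.log 2 i, Nat.log_pos (by norm_num) hi2, hlog.symm⟩

include h1 h2 in
lemma cA_eq_pow (K : ℕ) : cantorA aseq K = a ^ Eexp K := by
  rw [cantorA, Eexp, ← Finset.prod_pow_eq_pow_sum]
  exact Finset.prod_congr rfl fun i hi =>
    aseq_eq_pow h1 h2 i (Finset.mem_Icc.mp hi).1

include hm ha0 halt h1 h2 in
lemma exists_c0 (t : ℝ) (ht0 : 0 < t) (hts : t < Real.log m / (-Real.log a)) :
    ∃ c0 : ℝ, 0 < c0 ∧ ∀ K : ℕ, c0 ≤ (cantorA aseq K) ^ t * (m:ℝ)^K := by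
  have hm0 : (0:ℝ) < m := by positivity
  have hm1 : (1:ℝ) < m := by
    have : (2:ℝ) ≤ m := by exact_mod_cast hm
    linarith
  have hla : Real.log a < 0 := Real.log_neg ha0 halt
  set s := Real.log m / (-Real.log a) with hs
  have hs0 : 0 < s := div_pos (Real.log_pos hm1) (by linarith)
  have has : a ^ s = ((m:ℝ))⁻¹ := by
    rw [Real.rpow_def_of_pos ha0, mul_comm]
    have hseq : s * Real.log a = -Real.log m := by
      rw [hs, div_mul_eq_mul_div, div_eq_iff (by linarith : -Real.log a ≠ 0)]
      ring
    rw [hseq, Real.exp_neg, Real.exp_log hm0]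
  set f : ℕ → ℝ := fun K => (cantorA aseq K) ^ t * (m:ℝ)^K with hf
  have hApos : ∀ K, 0 < cantorA aseq K := by
    intro K; rw [cA_eq_pow h1 h2 K]; positivity
  have hfpos : ∀ K, 0 < f K := fun K =>
    mul_pos (Real.rpow_pos_of_pos (hApos K) t) (by positivity)
  set δ := (s - t)/t with hδ
  have hδ0 : 0 < δ := div_pos (by linarith) ht0
  -- find M
  have hNM : ∀ᶠ N : ℕ in atTop, ((N:ℝ))^2 * (1/2)^N < δ :=
    (tendsto_pow_const_mul_const_pow_of_lt_one 2 (by norm_num) (by norm_num)).eventually_lt_const hδ0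
  obtain ⟨M, hM⟩ := eventually_atTop.mp hNM
  set K0 := 2^M with hK0
  have hbig : ∀ K, K0 ≤ K → 1 ≤ f K := by
    intro K hK
    have hK1 : 1 ≤ K := le_trans (Nat.one_le_two_pow) hK
    have hKne : K ≠ 0 := by omega
    set N := Nat.log 2 K with hN
    have hNM' : M ≤ N := (Nat.le_log_iff_pow_le (by norm_num) hKne).mpr hK
    have h2N : 2^N ≤ K := Nat.pow_log_le_self 2 hKne
    have hN2 : ((N:ℝ))^2 * (1/2)^N < δ := hM N hNM'
    have h2Npos : (0:ℝ) < 2^N := by positivity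
    have hNδ : ((N:ℝ))^2 ≤ δ * 2^N := by
      have := mul_lt_mul_of_pos_right hN2 h2Npos
      have hpow : ((1:ℝ)/2)^N * 2^N = 1 := by
        rw [div_pow, one_pow, div_mul_cancel₀]
        positivity
      nlinarith
    have h2NK : ((2:ℝ))^N ≤ K := by exact_mod_cast h2N
    have hEK : (Eexp K : ℝ) ≤ K + ((N:ℝ))^2 := by
      have := Eexp_le K
      rw [← hN] at this
      have : (Eexp K : ℝ) ≤ (K : ℝ) + (N:ℝ) * (N:ℝ) := by exact_mod_cast this
      nlinarith
    have hexp : t * (Eexp K) ≤ s * K := by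
      have h1' : t * (Eexp K) ≤ t * (K + ((N:ℝ))^2) :=
        mul_le_mul_of_nonneg_left hEK ht0.le
      have h2' : ((N:ℝ))^2 ≤ δ * K := le_trans hNδ
        (mul_le_mul_of_nonneg_left h2NK hδ0.le)
      have : t * δ = s - t := by rw [hδ]; field_simp
      nlinarith
    -- now f K ≥ 1
    have hAK : cantorA aseq K = a ^ ((Eexp K : ℝ)) := by
      rw [cA_eq_pow h1 h2 K, ← Real.rpow_natCast a (Eexp K)]
    have hAKt : (cantorA aseq K) ^ t = a ^ (t * (Eexp K : ℝ)) := by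
      rw [hAK, ← Real.rpow_mul ha0.le, mul_comm]
    have hge : a ^ (t * (Eexp K : ℝ)) ≥ a ^ (s * (K:ℝ)) :=
      Real.rpow_le_rpow_of_exponent_ge ha0 halt.le hexp
    have hsK : a ^ (s * (K:ℝ)) = ((m:ℝ)⁻¹)^K := by
      rw [Real.rpow_mul ha0.le, has, Real.rpow_natCast]
    have hfK : f K ≥ ((m:ℝ)⁻¹)^K * (m:ℝ)^K := by
      rw [hf]
      apply mul_le_mul_of_nonneg_right _ (by positivity : (0:ℝ) ≤ (m:ℝ)^K)
      rw [hAKt, ← hsK]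
      exact hge
    have : ((m:ℝ)⁻¹)^K * (m:ℝ)^K = 1 := by
      rw [inv_pow, inv_mul_cancel₀ (by positivity)]
    linarith
  -- finite part
  classical
  have hne : ((Finset.range (K0+1)).image f).Nonempty :=
    ⟨f 0, Finset.mem_image_of_mem f (Finset.mem_range.mpr (Nat.succ_pos _))⟩
  set c0 := min 1 (((Finset.range (K0+1)).image f).min' hne) with hc0
  have hmin_pos : 0 < ((Finset.range (K0+1)).image f).min' hne := by
    obtain ⟨k, _, hk⟩ := Finset.mem_image.mp (Finset.min'_mem _ hne)
    rw [← hk]; exact hfpos k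
  refine ⟨c0, lt_min (by norm_num) hmin_pos, fun K => ?_⟩
  rcases Nat.lt_or_ge K (K0+1) with h | h
  · calc c0 ≤ ((Finset.range (K0+1)).image f).min' hne := min_le_right _ _
      _ ≤ f K := Finset.min'_le _ _ (Finset.mem_image_of_mem f (Finset.mem_range.mpr h))
  · calc c0 ≤ 1 := min_le_left _ _
      _ ≤ f K := hbig K (by omega)

end lowerprep

noncomputable def dig (m : ℕ) (i : ℕ) (x : ℝ) : ℕ :=
  (⌊(m:ℝ)^i * x⌋ - m * ⌊(m:ℝ)^(i-1) * x⌋).toNat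

noncomputable def digd (m : ℕ) (x : ℝ) : ℕ → ℕ := fun i => if i = 0 then 0 else dig m i x

noncomputable def gmap (m : ℕ) (aseq : ℕ → ℝ) (x : ℝ) : ℝ := val m aseq (digd m x)

section digs
variable (hm : 2 ≤ m)
include hm

lemma floor_digit (y : ℝ) :
    0 ≤ ⌊(m:ℝ)*y⌋ - (m:ℤ) * ⌊y⌋ ∧ ⌊(m:ℝ)*y⌋ - (m:ℤ) * ⌊y⌋ ≤ (m:ℤ) - 1 := by
  have hm0 : (0:ℝ) < m := by positivity
  have hlow : (m:ℤ) * ⌊y⌋ ≤ ⌊(m:ℝ)*y⌋ := by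
    apply Int.le_floor.mpr
    push_cast
    exact mul_le_mul_of_nonneg_left (Int.floor_le y) hm0.le
  have hup : ⌊(m:ℝ)*y⌋ < (m:ℤ) * ⌊y⌋ + m := by
    apply Int.floor_lt.mpr
    push_cast
    have := Int.lt_floor_add_one y
    nlinarith [Int.floor_le y]
  omega

lemma dig_succ_cast (j : ℕ) (x : ℝ) :
    (dig m (j+1) x : ℤ) = ⌊(m:ℝ)^(j+1) * x⌋ - (m:ℤ) * ⌊(m:ℝ)^j * x⌋ := by
  have hsplit : (m:ℝ)^(j+1) * x = (m:ℝ) * ((m:ℝ)^j * x) := by ring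
  have h := floor_digit hm ((m:ℝ)^j * x)
  rw [dig]
  simp only [Nat.add_sub_cancel]
  rw [hsplit]
  omega

lemma dig_succ_lt (j : ℕ) (x : ℝ) : dig m (j+1) x < m := by
  have h := floor_digit hm ((m:ℝ)^j * x)
  have hc := dig_succ_cast hm j x
  have hsplit : (m:ℝ)^(j+1) * x = (m:ℝ) * ((m:ℝ)^j * x) := by ring
  rw [hsplit] at hc
  omega

lemma digd_lt (x : ℝ) : ∀ k, digd m x k < m := by
  intro k
  rw [digd]
  cases k with
  | zero => simp; omega
  | succ j => simp only [Nat.succ_ne_zero, if_false]; exact dig_succ_lt hm j x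

lemma gmap_mem (x : ℝ) : gmap m aseq x ∈ cantorLikeSet m aseq :=
  mem_cls_iff.mpr ⟨digd m x, digd_lt hm x, rfl⟩

lemma floor_succ_dig (j : ℕ) (x : ℝ) :
    ⌊(m:ℝ)^(j+1) * x⌋ = (m:ℤ) * ⌊(m:ℝ)^j * x⌋ + dig m (j+1) x := by
  have := dig_succ_cast hm j x
  omega

lemma floor_agree {x y : ℝ} (hx : x ∈ Set.Ico (0:ℝ) 1) (hy : y ∈ Set.Ico (0:ℝ) 1) (K : ℕ)
    (h : ∀ i, 1 ≤ i → i ≤ K → dig m i x = dig m i y) :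
    ⌊(m:ℝ)^K * x⌋ = ⌊(m:ℝ)^K * y⌋ := by
  induction K with
  | zero =>
    simp only [pow_zero, one_mul]
    rw [Int.floor_eq_zero_iff.mpr hx, Int.floor_eq_zero_iff.mpr hy]
  | succ j ih =>
    rw [floor_succ_dig hm j x, floor_succ_dig hm j y,
      ih (fun i h1 h2 => h i h1 (le_trans h2 (Nat.le_succ j))), h (j+1) (by omega) (le_refl _)]

lemma mem_Ico_of_floor {x : ℝ} (hx : x ∈ Set.Ico (0:ℝ) 1) (K : ℕ) (n0 : ℤ)
    (h : ⌊(m:ℝ)^K * x⌋ = n0) :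
    x ∈ Set.Ico ((n0:ℝ)/(m:ℝ)^K) (((n0:ℝ)+1)/(m:ℝ)^K) := by
  have hm0 : (0:ℝ) < (m:ℝ)^K := by positivity
  have h1 : (n0:ℝ) ≤ (m:ℝ)^K * x := by rw [← h]; exact Int.floor_le _
  have h2 : (m:ℝ)^K * x < (n0:ℝ) + 1 := by
    rw [← h]; push_cast; exact Int.lt_floor_add_one _
  constructor
  · rw [div_le_iff₀ hm0]; linarith [h1]
  · rw [lt_div_iff₀ hm0]; linarith [h2]

lemma gmap_measurable (hb : ∀ k : ℕ, 0 < aseq (k+1) ∧ aseq (k+1) ≤ 1/(m+1)) :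
    Measurable (gmap m aseq) := by
  have hterm : ∀ k : ℕ, Measurable (fun x : ℝ => (digd m x (k+1) : ℝ) * cc m aseq k) := by
    intro k
    apply Measurable.mul_const
    have h1 : Measurable fun x : ℝ => ⌊(m:ℝ)^(k+1) * x⌋ :=
      Int.measurable_floor.comp (measurable_id.const_mul _)
    have h2 : Measurable fun x : ℝ => ⌊(m:ℝ)^(k+1-1) * x⌋ :=
      Int.measurable_floor.comp (measurable_id.const_mul _)
    have h3 : Measurable fun x : ℝ => (⌊(m:ℝ)^(k+1) * x⌋, ⌊(m:ℝ)^(k+1-1) * x⌋) := h1.prodMk h2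
    have h4 : Measurable fun p : ℤ × ℤ => (((p.1 - (m:ℤ) * p.2).toNat : ℕ) : ℝ) :=
      measurable_of_countable _
    have : (fun x : ℝ => (digd m x (k+1) : ℝ))
        = (fun p : ℤ × ℤ => (((p.1 - (m:ℤ) * p.2).toNat : ℕ) : ℝ))
          ∘ (fun x : ℝ => (⌊(m:ℝ)^(k+1) * x⌋, ⌊(m:ℝ)^(k+1-1) * x⌋)) := by
      funext x
      simp only [Function.comp_apply, digd, Nat.succ_ne_zero, if_false, dig]
    rw [this]
    exact h4.comp h3
  have hpartial : ∀ n : ℕ,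
      Measurable (fun x : ℝ => ∑ k ∈ Finset.range n, (digd m x (k+1):ℝ) * cc m aseq k) :=
    fun n => Finset.measurable_sum _ (fun k _ => hterm k)
  apply measurable_of_tendsto_metrizable hpartial
  rw [tendsto_pi_nhds]
  intro x
  exact ((summable_term hm hb (digd m x) (digd_lt hm x)).hasSum).tendsto_sum_nat

end digs

section ballest
variable (hm : 2 ≤ m) (hb : ∀ k : ℕ, 0 < aseq (k+1) ∧ aseq (k+1) ≤ 1/(m+1))
include hm hb

lemma ball_est (z ρ : ℝ) (hρ : 0 ≤ ρ) (K : ℕ) (hsmall : 2*ρ < gp m aseq K) :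
    Measure.map (gmap m aseq) (volume.restrict (Set.Ico (0:ℝ) 1)) (Metric.closedBall z ρ)
      ≤ ENNReal.ofReal ((1/(m:ℝ))^(K+1)) := by
  rw [Measure.map_apply (gmap_measurable hm hb) measurableSet_closedBall,
    Measure.restrict_apply' measurableSet_Ico]
  set T := gmap m aseq ⁻¹' Metric.closedBall z ρ ∩ Set.Ico (0:ℝ) 1 with hT
  rcases Set.eq_empty_or_nonempty T with hTe | ⟨x0, hx0⟩
  · rw [hTe]; simp
  · set n0 := ⌊(m:ℝ)^(K+1) * x0⌋ with hn0
    have hsub : T ⊆ Set.Ico ((n0:ℝ)/(m:ℝ)^(K+1)) (((n0:ℝ)+1)/(m:ℝ)^(K+1)) := by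
      intro x hx
      have hd : ∀ i, 1 ≤ i → i ≤ K+1 → dig m i x = dig m i x0 := by
        have hgx : dist (gmap m aseq x) z ≤ ρ := Metric.mem_closedBall.mp hx.1
        have hgx0 : dist (gmap m aseq x0) z ≤ ρ := Metric.mem_closedBall.mp hx0.1
        have hdist : |val m aseq (digd m x) - val m aseq (digd m x0)| < gp m aseq K := by
          have htri : |gmap m aseq x - gmap m aseq x0| ≤ 2*ρ := by
            have e1 : |gmap m aseq x - z| ≤ ρ := by rwa [Real.dist_eq] at hgx
            have e2 : |gmap m aseq x0 - z| ≤ ρ := by rwa [Real.dist_eq] at hgx0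
            calc |gmap m aseq x - gmap m aseq x0|
                = |(gmap m aseq x - z) + (z - gmap m aseq x0)| := by ring_nf
              _ ≤ |gmap m aseq x - z| + |z - gmap m aseq x0| := abs_add_le _ _
              _ ≤ ρ + ρ := by
                  refine add_le_add e1 ?_
                  rwa [abs_sub_comm]
              _ = 2*ρ := by ring
          calc |val m aseq (digd m x) - val m aseq (digd m x0)|
              = |gmap m aseq x - gmap m aseq x0| := rfl
            _ ≤ 2*ρ := htri
            _ < gp m aseq K := hsmall
        have hag := close_agree hm hb (digd m x) (digd m x0)
          (digd_lt hm x) (digd_lt hm x0) K hdist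
        intro i h1 h2
        have := hag i h1 h2
        simpa [digd, (show i ≠ 0 by omega)] using this
      have hfl : ⌊(m:ℝ)^(K+1) * x⌋ = n0 := floor_agree hm hx.2 hx0.2 (K+1) hd
      exact mem_Ico_of_floor hm hx.2 (K+1) n0 hfl
    calc volume T ≤ volume (Set.Ico ((n0:ℝ)/(m:ℝ)^(K+1)) (((n0:ℝ)+1)/(m:ℝ)^(K+1))) :=
          measure_mono hsub
      _ = ENNReal.ofReal (((n0:ℝ)+1)/(m:ℝ)^(K+1) - (n0:ℝ)/(m:ℝ)^(K+1)) := Real.volume_Ico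
      _ = ENNReal.ofReal ((1/(m:ℝ))^(K+1)) := by
          congr 1
          rw [div_sub_div_same, add_sub_cancel_left, one_div_pow]

end ballest

section lower
variable (hm : 2 ≤ m) (hb : ∀ k : ℕ, 0 < aseq (k+1) ∧ aseq (k+1) ≤ 1/(m+1))
  {a : ℝ} (ha0 : 0 < a) (halt : a < 1)
  (h1 : ∀ n : ℕ, 1 ≤ n → aseq (2 ^ n) = a ^ n)
  (h2 : ∀ k : ℕ, ¬(∃ n : ℕ, 1 ≤ n ∧ k = 2 ^ n) → aseq k = a)
include hm hb ha0 halt h1 h2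

lemma lower_dimH (t : NNReal) (ht0 : 0 < (t:ℝ))
    (hts : (t:ℝ) < Real.log m / (-Real.log a)) :
    (t : ENNReal) ≤ dimH (cantorLikeSet m aseq) := by
  obtain ⟨c0, hc0, hc0K⟩ := exists_c0 hm ha0 halt h1 h2 (t:ℝ) ht0 hts
  have hm0 : (0:ℝ) < m := by positivity
  set C : ℝ := (1/c0) * (2*(m:ℝ)^2)^((t:ℝ)) with hC
  have hCpos : 0 < C := by
    apply mul_pos (by positivity)
    exact Real.rpow_pos_of_pos (by positivity) _
  set εC : ENNReal := (ENNReal.ofReal C)⁻¹ with hεC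
  have hofC0 : ENNReal.ofReal C ≠ 0 := by
    rw [ne_eq, ENNReal.ofReal_eq_zero]
    push_neg
    exact hCpos
  have hofCtop : ENNReal.ofReal C ≠ ⊤ := ENNReal.ofReal_ne_top
  have hεC0 : εC ≠ 0 := by
    rw [hεC, ne_eq, ENNReal.inv_eq_zero]
    exact hofCtop
  have hεCtop : εC ≠ ⊤ := by
    rw [hεC]
    exact ENNReal.inv_ne_top.mpr hofC0
  set ν := volume.restrict (Set.Ico (0:ℝ) 1) with hν
  set μ0 := Measure.map (gmap m aseq) ν with hμ0
  set μ := εC • μ0 with hμ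
  have hgp0 : 0 < gp m aseq 0 := gp_pos hm hb 0
  set ε₀ := ENNReal.ofReal (gp m aseq 0 / 4) with hε₀
  have hε₀pos : 0 < ε₀ := by rw [hε₀]; exact ENNReal.ofReal_pos.mpr (by linarith)
  have hball : ∀ (z ρ : ℝ), 0 ≤ ρ → ∀ K : ℕ, 2*ρ < gp m aseq K →
      μ (Metric.closedBall z ρ) ≤ εC * ENNReal.ofReal ((1/(m:ℝ))^(K+1)) := by
    intro z ρ hρ K hK
    rw [hμ, Measure.smul_apply, smul_eq_mul]
    exact mul_le_mul_right (ball_est hm hb z ρ hρ K hK) εC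
  have key : ∀ s' : Set ℝ, EMetric.diam s' ≤ ε₀ → μ s' ≤ EMetric.diam s' ^ ((t:ℝ)) := by
    intro s' hs'
    rcases Set.eq_empty_or_nonempty s' with rfl | ⟨x0, hx0⟩
    · simp
    have hD_ne : EMetric.diam s' ≠ ⊤ := ne_top_of_le_ne_top ENNReal.ofReal_ne_top hs'
    set ρ := (EMetric.diam s').toReal with hρdef
    have hρ0 : 0 ≤ ρ := ENNReal.toReal_nonneg
    have hsub : s' ⊆ Metric.closedBall x0 ρ := by
      intro y hy
      rw [Metric.mem_closedBall, dist_edist]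
      exact ENNReal.toReal_mono hD_ne (EMetric.edist_le_diam_of_mem hy hx0)
    have hρε : ρ ≤ gp m aseq 0 / 4 := by
      rw [hρdef]
      calc (EMetric.diam s').toReal
          ≤ ε₀.toReal := ENNReal.toReal_mono ENNReal.ofReal_ne_top hs'
        _ = gp m aseq 0 / 4 := by rw [hε₀, ENNReal.toReal_ofReal (by linarith)]
    rcases eq_or_lt_of_le hρ0 with hρz | hρpos
    · -- ρ = 0 : the set has diameter zero
      have hle0 : ∀ K : ℕ, μ s' ≤ εC * ENNReal.ofReal ((1/(m:ℝ))^(K+1)) := by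
        intro K
        refine le_trans (measure_mono hsub) ?_
        refine hball x0 ρ hρ0 K ?_
        rw [← hρz]
        simpa using gp_pos hm hb K
      have htends : Filter.Tendsto (fun K : ℕ => εC * ENNReal.ofReal ((1/(m:ℝ))^(K+1)))
          atTop (nhds 0) := by
        have hinner : Filter.Tendsto (fun K : ℕ => ENNReal.ofReal ((1/(m:ℝ))^(K+1)))
            atTop (nhds 0) := by
          rw [show (0:ENNReal) = ENNReal.ofReal 0 by simp]
          apply ENNReal.tendsto_ofReal
          have hhalf : (0:ℝ) ≤ 1/(m:ℝ) := by positivity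
          have hlt : (1:ℝ)/(m:ℝ) < 1 := by
            rw [div_lt_one hm0]
            have : (2:ℝ) ≤ m := by exact_mod_cast hm
            linarith
          have := (tendsto_pow_atTop_nhds_zero_of_lt_one hhalf hlt).comp
            (tendsto_add_atTop_nat 1)
          exact this
        have := ENNReal.Tendsto.const_mul hinner (Or.inr hεCtop)
        simpa using this
      have hμz : μ s' = 0 := le_antisymm (ge_of_tendsto' htends hle0) zero_le
      rw [hμz]
      exact zero_le
    · -- ρ > 0
      have hex : ∃ j, gp m aseq j ≤ 2*ρ := by
        have hhalf : (0:ℝ) ≤ 1/((m:ℝ)+1) := by positivity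
        have hlt : (1:ℝ)/((m:ℝ)+1) < 1 := by
          rw [div_lt_one (by positivity)]
          have : (2:ℝ) ≤ m := by exact_mod_cast hm
          linarith
        obtain ⟨n, hn⟩ := exists_pow_lt_of_lt_one (show (0:ℝ) < 2*ρ by linarith) hlt
        exact ⟨n, le_trans (le_trans (gp_le hm hb n) (cA_le_pow hb n)) hn.le⟩
      classical
      set j0 := Nat.find hex with hj0def
      have hj0spec : gp m aseq j0 ≤ 2*ρ := Nat.find_spec hex
      have hj0pos : j0 ≠ 0 := by
        intro h0
        rw [h0] at hj0spec
        linarith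
      obtain ⟨K, hK⟩ : ∃ K, j0 = K + 1 := ⟨j0 - 1, by omega⟩
      have h2ρ : 2*ρ < gp m aseq K := by
        have := Nat.find_min hex (show K < j0 by omega)
        exact lt_of_not_ge this
      have hKgp : gp m aseq (K+1) ≤ 2*ρ := hK ▸ hj0spec
      have hμball : μ s' ≤ εC * ENNReal.ofReal ((1/(m:ℝ))^(K+1)) :=
        le_trans (measure_mono hsub) (hball x0 ρ hρ0 K h2ρ)
      have hAle : cantorA aseq (K+1) ≤ 2*(m:ℝ)^2*ρ := by
        have hge := gp_ge hm hb (K+1)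
        have hm1' : (1:ℝ) ≤ (m:ℝ) - 1 := hm1 hm hb
        have hgpK1 : 0 < gp m aseq (K+1) := gp_pos hm hb (K+1)
        rw [div_le_iff₀ (by nlinarith : (0:ℝ) < ((m:ℝ)+1)*((m:ℝ)-1))] at hge
        nlinarith
      have hchain : (1/(m:ℝ))^(K+1) ≤ C * ρ^((t:ℝ)) := by
        have h0 := hc0K (K+1)
        have hApow : (cantorA aseq (K+1))^((t:ℝ)) ≤ (2*(m:ℝ)^2*ρ)^((t:ℝ)) :=
          Real.rpow_le_rpow (cA_pos hb (K+1)).le hAle (by positivity)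
        have hmulr : (2*(m:ℝ)^2*ρ)^((t:ℝ)) = (2*(m:ℝ)^2)^((t:ℝ)) * ρ^((t:ℝ)) :=
          Real.mul_rpow (by positivity) hρ0
        have hmK : (0:ℝ) < (m:ℝ)^(K+1) := by positivity
        have hAt0 : (0:ℝ) ≤ (cantorA aseq (K+1))^((t:ℝ)) :=
          (Real.rpow_pos_of_pos (cA_pos hb (K+1)) _).le
        calc (1/(m:ℝ))^(K+1) = 1/(m:ℝ)^(K+1) := one_div_pow _ _
          _ ≤ (cantorA aseq (K+1))^((t:ℝ)) / c0 := by
              rw [div_le_div_iff₀ hmK hc0]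
              linarith
          _ ≤ ((2*(m:ℝ)^2)^((t:ℝ)) * ρ^((t:ℝ))) / c0 := by
              rw [← hmulr]
              gcongr
          _ = C * ρ^((t:ℝ)) := by rw [hC]; ring
      have hDeq : EMetric.diam s' = ENNReal.ofReal ρ := (ENNReal.ofReal_toReal hD_ne).symm
      calc μ s' ≤ εC * ENNReal.ofReal ((1/(m:ℝ))^(K+1)) := hμball
        _ ≤ εC * ENNReal.ofReal (C * ρ^((t:ℝ))) :=
            mul_le_mul_right (ENNReal.ofReal_le_ofReal hchain) _
        _ = εC * (ENNReal.ofReal C * ENNReal.ofReal (ρ^((t:ℝ)))) := by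
            rw [ENNReal.ofReal_mul hCpos.le]
        _ = (εC * ENNReal.ofReal C) * ENNReal.ofReal (ρ^((t:ℝ))) := by
            rw [mul_assoc]
        _ = ENNReal.ofReal (ρ^((t:ℝ))) := by
            rw [hεC, ENNReal.inv_mul_cancel hofC0 hofCtop, one_mul]
        _ = (ENNReal.ofReal ρ)^((t:ℝ)) := (ENNReal.ofReal_rpow_of_pos hρpos).symm
        _ = EMetric.diam s' ^ ((t:ℝ)) := by rw [hDeq]
  have hle : μ ≤ μH[((t:ℝ))] :=
    MeasureTheory.Measure.le_hausdorffMeasure _ _ ε₀ hε₀pos key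
  have hμI : εC ≤ μ (cantorLikeSet m aseq) := by
    rw [hμ, Measure.smul_apply, smul_eq_mul]
    have hpre : gmap m aseq ⁻¹' (cantorLikeSet m aseq) = Set.univ :=
      Set.eq_univ_of_forall (fun x => gmap_mem hm x)
    have hν1 : ν (gmap m aseq ⁻¹' (cantorLikeSet m aseq)) = 1 := by
      rw [hpre, hν, Measure.restrict_apply_univ, Real.volume_Ico]
      norm_num
    have hmap := MeasureTheory.Measure.le_map_apply (μ := ν)
      ((gmap_measurable hm hb).aemeasurable) (cantorLikeSet m aseq)
    rw [hν1] at hmap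
    calc εC = εC * 1 := (mul_one _).symm
      _ ≤ εC * μ0 (cantorLikeSet m aseq) := mul_le_mul_right hmap εC
  have hH : μH[((t:ℝ))] (cantorLikeSet m aseq) ≠ 0 := by
    intro h0
    have h2' := MeasureTheory.Measure.le_iff'.mp hle (cantorLikeSet m aseq)
    rw [h0] at h2'
    have hz : μ (cantorLikeSet m aseq) = 0 := le_antisymm h2' zero_le
    rw [hz] at hμI
    exact hεC0 (le_antisymm hμI zero_le)
  exact le_dimH_of_hausdorffMeasure_ne_zero hH

end lower

end Stmt7


/-- For `a_k = a^n` when `k = 2^n` (`n ≥ 1`) and `a_k = a` otherwise, the Cantor-like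
set `I = I_ā` is HNUP and `dim_H I = log m / (−log a)`. -/
theorem stmt7 (m : ℕ) (hm : 2 ≤ m) (a : ℝ) (ha0 : 0 < a) (ha1 : a ≤ 1 / (m + 1))
    (aseq : ℕ → ℝ)
    (h1 : ∀ n : ℕ, 1 ≤ n → aseq (2 ^ n) = a ^ n)
    (h2 : ∀ k : ℕ, ¬(∃ n : ℕ, 1 ≤ n ∧ k = 2 ^ n) → aseq k = a) :
    HNUP (cantorLikeSet m aseq) ∧
      dimH (cantorLikeSet m aseq) = ENNReal.ofReal (Real.log m / (-Real.log a)) := by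
  have hb : ∀ k : ℕ, 0 < aseq (k+1) ∧ aseq (k+1) ≤ 1/(m+1) := by
    intro k
    by_cases h : ∃ n : ℕ, 1 ≤ n ∧ k+1 = 2^n
    · obtain ⟨n, hn, hkn⟩ := h
      rw [hkn, h1 n hn]
      have halt : a < 1 := Stmt7.ha_lt_one hm ha1
      refine ⟨by positivity, ?_⟩
      calc a^n ≤ a^1 := pow_le_pow_of_le_one ha0.le halt.le hn
        _ = a := pow_one a
        _ ≤ 1/(m+1) := ha1
    · rw [h2 (k+1) h]; exact ⟨ha0, ha1⟩
  constructor
  · exact Stmt7.hnup_cls hm ha0 ha1 hb h1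
  · set sval := Real.log m / (-Real.log a) with hsdef
    have halt : a < 1 := Stmt7.ha_lt_one hm ha1
    have hm1R : (1:ℝ) < m := by
      have : (2:ℝ) ≤ m := by exact_mod_cast hm
      linarith
    have hla : Real.log a < 0 := Real.log_neg ha0 halt
    have hs0 : 0 < sval := div_pos (Real.log_pos hm1R) (by linarith)
    have hba : ∀ k : ℕ, aseq (k+1) ≤ a := by
      intro k
      by_cases h : ∃ n : ℕ, 1 ≤ n ∧ k+1 = 2^n
      · obtain ⟨n, hn, hkn⟩ := h
        rw [hkn, h1 n hn]
        calc a^n ≤ a^1 := pow_le_pow_of_le_one ha0.le halt.le hn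
          _ = a := pow_one a
      · rw [h2 (k+1) h]
    apply le_antisymm
    · by_contra hcon
      push_neg at hcon
      obtain ⟨d, hd1, hd2⟩ := ENNReal.lt_iff_exists_nnreal_btwn.mp hcon
      have hds : sval < (d:ℝ) := by
        rw [← ENNReal.ofReal_coe_nnreal] at hd1
        exact (ENNReal.ofReal_lt_ofReal_iff_of_nonneg hs0.le).mp hd1
      have hz := Stmt7.hausdorff_d_zero hm hb ha0 hba halt d hds
      have htop := hausdorffMeasure_of_lt_dimH hd2
      rw [hz] at htop
      exact (by simp : (0:ENNReal) ≠ ⊤) htop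
    · by_contra hcon
      push_neg at hcon
      obtain ⟨d, hd1, hd2⟩ := ENNReal.lt_iff_exists_nnreal_btwn.mp hcon
      have hds : (d:ℝ) < sval := by
        rw [← ENNReal.ofReal_coe_nnreal] at hd2
        exact (ENNReal.ofReal_lt_ofReal_iff hs0).mp hd2
      have hd0 : 0 < (d:ℝ) := by
        have h0' : (0:ENNReal) < (d : ENNReal) := lt_of_le_of_lt zero_le hd1
        exact_mod_cast ENNReal.coe_pos.mp h0'
      have hlow := Stmt7.lower_dimH hm hb ha0 halt h1 h2 d hd0 hds
      exact absurd hlow (not_le.mpr hd1)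
end

section
/- Let m = 2 and a_k = 4^{−k} for k = 1, 2, …, and let I = I_ā be the associated Cantor-like set. Then dim_H I = 0 and I is hereditarily non uniformly perfect. -/
open MeasureTheory Filter Metric

namespace Stmt9Aux

noncomputable def aa : ℕ → ℝ := fun k => (4 : ℝ)⁻¹ ^ k
noncomputable def A : ℕ → ℝ := cantorA aa
noncomputable def b : ℕ → ℝ := fun k => A k - A (k + 1)

lemma A_zero : A 0 = 1 := by simp [A, cantorA]

lemma A_succ (n : ℕ) : A (n + 1) = A n * (4 : ℝ)⁻¹ ^ (n + 1) := by
  simp only [A, cantorA, aa]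
  rw [Finset.prod_Icc_succ_top (Nat.le_add_left 1 n)]

lemma A_pos (n : ℕ) : 0 < A n := by
  induction n with
  | zero => rw [A_zero]; norm_num
  | succ n ih => rw [A_succ]; positivity

lemma A_succ_le (n : ℕ) : A (n + 1) ≤ A n * 4⁻¹ := by
  rw [A_succ]
  have h : (4 : ℝ)⁻¹ ^ (n + 1) ≤ 4⁻¹ := by
    calc (4 : ℝ)⁻¹ ^ (n + 1) ≤ 4⁻¹ ^ 1 :=
      pow_le_pow_of_le_one (by norm_num) (by norm_num) (Nat.le_add_left 1 n)
    _ = 4⁻¹ := pow_one _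
  exact mul_le_mul_of_nonneg_left h (A_pos n).le

lemma A_le (n : ℕ) : A n ≤ (4 : ℝ)⁻¹ ^ n := by
  induction n with
  | zero => rw [A_zero]; norm_num
  | succ n ih =>
    calc A (n + 1) ≤ A n * 4⁻¹ := A_succ_le n
    _ ≤ (4 : ℝ)⁻¹ ^ n * 4⁻¹ := by nlinarith [A_pos n]
    _ = (4 : ℝ)⁻¹ ^ (n + 1) := (pow_succ _ _).symm

lemma A_mono (n : ℕ) : A (n + 1) ≤ A n := by nlinarith [A_succ_le n, A_pos n]

lemma A_anti : Antitone A := antitone_nat_of_succ_le A_mono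

lemma b_nonneg (n : ℕ) : 0 ≤ b n := sub_nonneg.2 (A_mono n)

lemma b_le (n : ℕ) : b n ≤ (4 : ℝ)⁻¹ ^ n :=
  le_trans (by simpa [b] using sub_le_self (A n) (A_pos (n+1)).le) (A_le n)

lemma summable_b : Summable b :=
  Summable.of_nonneg_of_le b_nonneg b_le
    (summable_geometric_of_lt_one (by norm_num) (by norm_num))

lemma A_tendsto : Tendsto A atTop (nhds 0) := by
  apply squeeze_zero (fun n => (A_pos n).le) A_le
  exact tendsto_pow_atTop_nhds_zero_of_lt_one (by norm_num) (by norm_num)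

lemma tail_hasSum (n : ℕ) : HasSum (fun j => b (j + n)) (A n) := by
  have hs : Summable fun j => b (j + n) := (summable_nat_add_iff n).2 summable_b
  rw [hs.hasSum_iff_tendsto_nat]
  have heq : ∀ N, ∑ j ∈ Finset.range N, b (j + n) = A n - A (N + n) := by
    intro N
    have : ∀ j, b (j + n) = A (j + n) - A ((j + 1) + n) := by
      intro j; simp only [b]; ring_nf
    calc ∑ j ∈ Finset.range N, b (j + n)
        = ∑ j ∈ Finset.range N, (A (j + n) - A ((j + 1) + n)) :=
          Finset.sum_congr rfl fun j _ => this j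
      _ = A (0 + n) - A (N + n) := Finset.sum_range_sub' (fun j => A (j + n)) N
      _ = A n - A (N + n) := by rw [Nat.zero_add]
  simp only [heq]
  have : Tendsto (fun N => A (N + n)) atTop (nhds 0) :=
    A_tendsto.comp (tendsto_add_atTop_nat n)
  simpa using tendsto_const_nhds.sub this

lemma tail_tsum (n : ℕ) : ∑' j, b (j + n) = A n := (tail_hasSum n).tsum_eq

lemma summable_digits {d : ℕ → ℕ} (hd : ∀ k, d k < 2) :
    Summable fun k => (d (k + 1) : ℝ) * b k := by
  apply Summable.of_nonneg_of_le (fun k => mul_nonneg (Nat.cast_nonneg _) (b_nonneg k)) (fun k => ?_) summable_b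
  have h1 : (d (k + 1) : ℝ) ≤ 1 := by
    exact_mod_cast Nat.lt_succ_iff.1 (hd (k + 1))
  exact mul_le_of_le_one_left (b_nonneg k) h1

lemma mem_iff {x : ℝ} :
    x ∈ cantorLikeSet 2 aa ↔
      ∃ d : ℕ → ℕ, (∀ k, d k < 2) ∧ x = ∑' k, (d (k + 1) : ℝ) * b k := by
  have hb : ∀ (d : ℕ → ℕ) (k : ℕ),
      (d (k + 1) : ℝ) * (cantorA aa k - cantorA aa (k + 1)) / ((2 : ℕ) - 1)
        = (d (k + 1) : ℝ) * b k := by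
    intro d k
    have : (((2 : ℕ) : ℝ) - 1) = 1 := by norm_num
    simp only [b, A]
    push_cast
    ring
  constructor
  · rintro ⟨d, h1, h2⟩
    exact ⟨d, h1, by rw [h2]; exact tsum_congr fun k => hb d k⟩
  · rintro ⟨d, h1, h2⟩
    exact ⟨d, h1, by rw [h2]; exact tsum_congr fun k => (hb d k).symm⟩

lemma dist_struct {x y : ℝ} (hx : x ∈ cantorLikeSet 2 aa) (hy : y ∈ cantorLikeSet 2 aa)
    (hxy : x ≠ y) : ∃ k, A k - 2 * A (k + 1) ≤ |x - y| ∧ |x - y| ≤ A k := by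
  obtain ⟨d, hd, hxe⟩ := mem_iff.1 hx
  obtain ⟨e, he, hye⟩ := mem_iff.1 hy
  set f : ℕ → ℝ := fun k => (d (k + 1) : ℝ) * b k with hf
  set g : ℕ → ℝ := fun k => (e (k + 1) : ℝ) * b k with hg
  have sf : Summable f := summable_digits hd
  have sg : Summable g := summable_digits he
  set h : ℕ → ℝ := fun k => f k - g k with hh
  have sh : Summable h := sf.sub sg
  have habs : ∀ k, |h k| ≤ b k := by
    intro k
    have h1 : (d (k + 1) : ℝ) ≤ 1 := by exact_mod_cast Nat.lt_succ_iff.1 (hd (k + 1))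
    have h2 : (e (k + 1) : ℝ) ≤ 1 := by exact_mod_cast Nat.lt_succ_iff.1 (he (k + 1))
    have h3 : (0:ℝ) ≤ (d (k + 1) : ℝ) := Nat.cast_nonneg _
    have h4 : (0:ℝ) ≤ (e (k + 1) : ℝ) := Nat.cast_nonneg _
    have hb := b_nonneg k
    have : h k = ((d (k + 1) : ℝ) - (e (k + 1) : ℝ)) * b k := by simp only [hh, hf, hg]; ring
    rw [this, abs_mul, abs_of_nonneg hb]
    have : |(d (k + 1) : ℝ) - (e (k + 1) : ℝ)| ≤ 1 := by
      rw [abs_sub_le_iff]; constructor <;> linarith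
    nlinarith
  have hne : ∃ k, d (k + 1) ≠ e (k + 1) := by
    by_contra hc
    push_neg at hc
    exact hxy (by rw [hxe, hye]; exact tsum_congr fun k => by simp only [hf, hg, hc k])
  set k0 := Nat.find hne with hk0def
  have hk0 : d (k0 + 1) ≠ e (k0 + 1) := Nat.find_spec hne
  have hmin : ∀ j < k0, d (j + 1) = e (j + 1) := fun j hj => by
    have := Nat.find_min hne hj
    push_neg at this; exact this
  have habs0 : |h k0| = b k0 := by
    have : h k0 = ((d (k0 + 1) : ℝ) - (e (k0 + 1) : ℝ)) * b k0 := by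
      simp only [hh, hf, hg]; ring
    rw [this, abs_mul, abs_of_nonneg (b_nonneg k0)]
    have hd2 : d (k0 + 1) = 0 ∨ d (k0 + 1) = 1 := by have := hd (k0+1); omega
    have he2 : e (k0 + 1) = 0 ∨ e (k0 + 1) = 1 := by have := he (k0+1); omega
    rcases hd2 with h1 | h1 <;> rcases he2 with h2 | h2 <;>
        first
          | (exact absurd (h1.trans h2.symm) hk0)
          | (rw [h1, h2]; norm_num)
  have hsub : x - y = ∑' k, h k := by
    rw [hxe, hye]; exact (Summable.tsum_sub sf sg).symm
  have hsplit : ∑' k, h k = (∑ k ∈ Finset.range k0, h k) + ∑' k, h (k + k0) :=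
    (Summable.sum_add_tsum_nat_add k0 sh).symm
  have hzero : ∑ k ∈ Finset.range k0, h k = 0 := by
    apply Finset.sum_eq_zero
    intro j hj
    simp only [hh, hf, hg, hmin j (Finset.mem_range.1 hj), sub_self]
  have sht : Summable fun k => h (k + k0) := (summable_nat_add_iff k0).2 sh
  have hsplit2 : ∑' k, h (k + k0) = h k0 + ∑' k, h (k + 1 + k0) := by
    rw [Summable.tsum_eq_zero_add sht]
    simp only [Nat.zero_add]
  set T := ∑' k, h (k + 1 + k0) with hT
  have hTabs : |T| ≤ A (k0 + 1) := by
    have hindex : ∀ k, k + 1 + k0 = k + (k0 + 1) := fun k => by omega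
    have s1 : Summable fun k => |h (k + 1 + k0)| := by
      simp only [hindex]
      exact ((summable_nat_add_iff (k0+1)).2 sh).abs
    calc |T| ≤ ∑' k, |h (k + 1 + k0)| := by
          simpa [Real.norm_eq_abs] using norm_tsum_le_tsum_norm (f := fun k => h (k + 1 + k0))
            (by simpa [Real.norm_eq_abs] using s1)
      _ ≤ ∑' k, b (k + (k0 + 1)) := by
          apply Summable.tsum_le_tsum _ s1 ((summable_nat_add_iff (k0+1)).2 summable_b)
          intro k
          rw [hindex k]
          exact habs _
      _ = A (k0 + 1) := tail_tsum (k0 + 1)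
  have hxyval : x - y = h k0 + T := by
    rw [hsub, hsplit, hzero, hsplit2, zero_add]
  refine ⟨k0, ?_, ?_⟩
  · have h1 : |h k0| ≤ |h k0 + T| + |T| := by
      have := abs_add_le (h k0 + T) (-T)
      simpa using this
    have hb0 : b k0 = A k0 - A (k0 + 1) := rfl
    rw [hxyval]
    have := habs0
    linarith [abs_nonneg T]
  · rw [hxyval]
    calc |h k0 + T| ≤ |h k0| + |T| := abs_add_le _ _
      _ ≤ b k0 + A (k0 + 1) := by rw [habs0]; linarith
      _ = A k0 := by simp only [b]; ring

lemma gap_mono : Antitone (fun k => A k - 2 * A (k + 1)) := by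
  apply antitone_nat_of_succ_le
  intro n
  have h1 := A_succ_le n
  have h2 := A_succ_le (n + 1)
  have h3 := A_pos (n + 2)
  have h4 := A_pos (n + 1)
  have h5 := A_pos n
  show A (n+1) - 2 * A (n+1+1) ≤ A n - 2 * A (n+1)
  nlinarith

lemma empty_annulus {x y : ℝ} (hx : x ∈ cantorLikeSet 2 aa) (hy : y ∈ cantorLikeSet 2 aa)
    (k : ℕ) : ¬ (A (k + 1) < |x - y| ∧ |x - y| < A k - 2 * A (k + 1)) := by
  rintro ⟨h1, h2⟩
  have hxy : x ≠ y := by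
    intro h; rw [h] at h1; simp at h1; linarith [A_pos (k + 1)]
  obtain ⟨k0, hlo, hhi⟩ := dist_struct hx hy hxy
  rcases le_or_gt k0 k with hk | hk
  · exact absurd h2 (not_lt.2 (le_trans (gap_mono hk) hlo))
  · have : A k0 ≤ A (k + 1) := A_anti hk
    linarith

lemma hnup : HNUP (cantorLikeSet 2 aa) := by
  rintro F hF ⟨hcmp, hnt, c, hc, hprop⟩
  obtain ⟨x, hxF, y, hyF, hxyne⟩ := hnt
  have hDpos : 0 < Metric.diam F := by
    have h1 : dist x y ≤ Metric.diam F := Metric.dist_le_diam_of_mem hcmp.isBounded hxF hyF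
    have h2 : 0 < dist x y := dist_pos.2 hxyne
    linarith
  obtain ⟨k, hk⟩ := exists_pow_lt_of_lt_one
    (lt_min hDpos (by positivity : (0:ℝ) < c / 2)) (show (4:ℝ)⁻¹ < 1 by norm_num)
  have hk1 : (4:ℝ)⁻¹ ^ k < Metric.diam F := lt_of_lt_of_le hk (min_le_left _ _)
  have hk2 : (4:ℝ)⁻¹ ^ k < c / 2 := lt_of_lt_of_le hk (min_le_right _ _)
  set r := A k - 2 * A (k + 1) with hr
  have hApos := A_pos k
  have hA1pos := A_pos (k + 1)
  have hstep := A_succ_le k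
  have hAle := A_le k
  have hrpos : 0 < r := by rw [hr]; nlinarith
  have hrlt : r < Metric.diam F := by rw [hr]; nlinarith
  have hcr : A (k + 1) < c * r := by
    have e0 : (4:ℝ)⁻¹ ^ (k + 1) ≤ (4:ℝ)⁻¹ ^ k :=
      pow_le_pow_of_le_one (by norm_num) (by norm_num) (Nat.le_succ k)
    have e1 : A (k + 1) ≤ A k * (4:ℝ)⁻¹ ^ k := by
      rw [A_succ]; exact mul_le_mul_of_nonneg_left e0 hApos.le
    have e2 : A k * ((4:ℝ)⁻¹ ^ k) < A k * (c / 2) := by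
      exact mul_lt_mul_of_pos_left hk2 hApos
    have e3 : c * (A k / 2) ≤ c * r := by
      apply mul_le_mul_of_nonneg_left _ hc.le
      rw [hr]; nlinarith
    nlinarith
  obtain ⟨z, hzF, hz1, hz2⟩ := hprop x hxF r hrpos hrlt
  rw [Real.norm_eq_abs] at hz1 hz2
  exact empty_annulus (hF hzF) (hF hxF) k ⟨lt_trans hcr hz1, hz2⟩

lemma A_le_sq (n : ℕ) : A n ≤ (2:ℝ)⁻¹ ^ (n * n) := by
  induction n with
  | zero => rw [A_zero]; norm_num
  | succ n ih =>
    have h1 : (4:ℝ)⁻¹ ^ (n + 1) = (2:ℝ)⁻¹ ^ (2 * (n + 1)) := by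
      rw [pow_mul]; norm_num
    have h2 : A (n + 1) ≤ (2:ℝ)⁻¹ ^ (n * n) * (2:ℝ)⁻¹ ^ (2 * (n + 1)) := by
      rw [A_succ, ← h1]
      exact mul_le_mul_of_nonneg_right ih (by positivity)
    calc A (n + 1) ≤ (2:ℝ)⁻¹ ^ (n * n + 2 * (n + 1)) := by rw [pow_add]; exact h2
      _ ≤ (2:ℝ)⁻¹ ^ ((n + 1) * (n + 1)) := by
          apply pow_le_pow_of_le_one (by norm_num) (by norm_num)
          ring_nf; omega

lemma real_decay {d : ℝ} (hd : 0 < d) :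
    Tendsto (fun n : ℕ => (2:ℝ) ^ n * A n ^ d) atTop (nhds 0) := by
  obtain ⟨j, hj⟩ : ∃ j : ℕ, 2 ≤ (j : ℝ) * d := by
    refine ⟨⌈2 / d⌉₊, ?_⟩
    have h1 : (2:ℝ) / d ≤ (⌈2 / d⌉₊ : ℝ) := Nat.le_ceil _
    calc (2:ℝ) = (2 / d) * d := by field_simp
      _ ≤ (⌈2 / d⌉₊ : ℝ) * d := mul_le_mul_of_nonneg_right h1 hd.le
  apply squeeze_zero' (Filter.Eventually.of_forall fun n => mul_nonneg (by positivity) (Real.rpow_nonneg (A_pos n).le d))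
    (g := fun n => (2:ℝ)⁻¹ ^ n) ?_ ?_
  · rw [eventually_atTop]
    refine ⟨j, fun n hn => ?_⟩
    have e1 : A n ^ d ≤ ((2:ℝ)⁻¹ ^ (n * n)) ^ d :=
      Real.rpow_le_rpow (A_pos n).le (A_le_sq n) hd.le
    have e2 : ((2:ℝ)⁻¹ ^ (n * n)) ^ d ≤ (2:ℝ)⁻¹ ^ (2 * n) := by
      rw [← Real.rpow_natCast (2:ℝ)⁻¹ (n * n), ← Real.rpow_mul (by norm_num),
        ← Real.rpow_natCast (2:ℝ)⁻¹ (2 * n)]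
      apply Real.rpow_le_rpow_of_exponent_ge (by norm_num) (by norm_num)
      have hn' : (j : ℝ) ≤ (n : ℝ) := by exact_mod_cast hn
      have hd0 : (0:ℝ) ≤ (n : ℝ) := Nat.cast_nonneg n
      have e4 : (j:ℝ) * d ≤ (n:ℝ) * d := mul_le_mul_of_nonneg_right hn' hd.le
      have e5 : 2 ≤ (n:ℝ) * d := le_trans hj e4
      push_cast
      nlinarith [mul_le_mul_of_nonneg_left e5 hd0]
    have e3 : (2:ℝ) ^ n * A n ^ d ≤ (2:ℝ) ^ n * (2:ℝ)⁻¹ ^ (2 * n) := by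
      apply mul_le_mul_of_nonneg_left (le_trans e1 e2) (by positivity)
    calc (2:ℝ) ^ n * A n ^ d ≤ (2:ℝ) ^ n * (2:ℝ)⁻¹ ^ (2 * n) := e3
      _ = (2:ℝ)⁻¹ ^ n := by
          rw [pow_mul, ← mul_pow]; norm_num
  · exact tendsto_pow_atTop_nhds_zero_of_lt_one (by norm_num) (by norm_num)

noncomputable def pp (n : ℕ) (v : Fin n → Bool) : ℝ :=
  ∑ i : Fin n, (if v i then b i.1 else 0)

noncomputable def tt (n : ℕ) (v : Fin n → Bool) : Set ℝ :=
  Set.Icc (pp n v) (pp n v + A n)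

lemma cover (n : ℕ) : cantorLikeSet 2 aa ⊆ ⋃ v : Fin n → Bool, tt n v := by
  intro x hx
  obtain ⟨dg, hdg, hxe⟩ := mem_iff.1 hx
  set f : ℕ → ℝ := fun k => (dg (k + 1) : ℝ) * b k with hf
  have sf : Summable f := summable_digits hdg
  set v : Fin n → Bool := fun i => decide (dg (i.1 + 1) = 1) with hv
  have hterm : ∀ i : Fin n, (if v i then b i.1 else 0) = f i.1 := by
    intro i
    have : dg (i.1 + 1) = 0 ∨ dg (i.1 + 1) = 1 := by have := hdg (i.1 + 1); omega
    rcases this with h | h <;> simp [hv, hf, h]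
  have hpv : pp n v = ∑ k ∈ Finset.range n, f k := by
    rw [pp]
    calc (∑ i : Fin n, (if v i then b i.1 else 0)) = ∑ i : Fin n, f i.1 :=
          Finset.sum_congr rfl (fun i _ => hterm i)
      _ = ∑ k ∈ Finset.range n, f k := Fin.sum_univ_eq_sum_range (fun k => f k) n
  have hxsplit : x = pp n v + ∑' k, f (k + n) := by
    rw [hxe, hpv, ← Summable.sum_add_tsum_nat_add n sf]
  have htail0 : 0 ≤ ∑' k, f (k + n) :=
    tsum_nonneg fun k => mul_nonneg (Nat.cast_nonneg _) (b_nonneg _)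
  have htailA : ∑' k, f (k + n) ≤ A n := by
    have hle : ∀ k : ℕ, f (k + n) ≤ b (k + n) := by
      intro k
      have h1 : (dg (k + n + 1) : ℝ) ≤ 1 := by
        exact_mod_cast Nat.lt_succ_iff.1 (hdg (k + n + 1))
      exact mul_le_of_le_one_left (b_nonneg _) h1
    have s1 : Summable fun k => f (k + n) := (summable_nat_add_iff n).2 sf
    have s2 : Summable fun k => b (k + n) := (summable_nat_add_iff n).2 summable_b
    calc (∑' k, f (k + n)) ≤ ∑' k, b (k + n) := Summable.tsum_le_tsum hle s1 s2
      _ = A n := tail_tsum n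
  refine Set.mem_iUnion.2 ⟨v, ?_⟩
  rw [tt]
  constructor
  · rw [hxsplit]; linarith
  · rw [hxsplit]; linarith


lemma hm_zero {d : ℝ} (hd : 0 < d) : μH[d] (cantorLikeSet 2 aa) = 0 := by
  classical
  have key : μH[d] (cantorLikeSet 2 aa) ≤
      liminf (fun n => ∑ v : Fin n → Bool, EMetric.diam (tt n v) ^ d) atTop := by
    apply MeasureTheory.Measure.hausdorffMeasure_le_liminf_sum d (cantorLikeSet 2 aa)
      (fun n => ENNReal.ofReal ((4:ℝ)⁻¹ ^ n)) ?_ tt ?_ ?_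
    · have : Tendsto (fun n : ℕ => (4:ℝ)⁻¹ ^ n) atTop (nhds 0) :=
        tendsto_pow_atTop_nhds_zero_of_lt_one (by norm_num) (by norm_num)
      simpa using ENNReal.tendsto_ofReal this
    · apply Filter.Eventually.of_forall
      intro n v
      rw [tt]
      simp only [Real.ediam_Icc, add_sub_cancel_left]
      exact ENNReal.ofReal_le_ofReal (A_le n)
    · exact Filter.Eventually.of_forall cover
  have hsum : ∀ n : ℕ, (∑ v : Fin n → Bool, EMetric.diam (tt n v) ^ d)
      = ENNReal.ofReal ((2:ℝ) ^ n * A n ^ d) := by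
    intro n
    have hdiam : ∀ v : Fin n → Bool, EMetric.diam (tt n v) ^ d
        = ENNReal.ofReal (A n ^ d) := by
      intro v
      rw [tt]
      simp only [EMetric.diam, Real.ediam_Icc, add_sub_cancel_left]
      exact ENNReal.ofReal_rpow_of_pos (A_pos n)
    rw [Finset.sum_congr rfl (fun v _ => hdiam v), Finset.sum_const]
    rw [Finset.card_univ, Fintype.card_fun]
    simp only [Fintype.card_bool, Fintype.card_fin]
    rw [nsmul_eq_mul, ENNReal.ofReal_mul (by positivity)]
    congr 1
    rw [Nat.cast_pow, ENNReal.ofReal_pow (by norm_num : (0:ℝ) ≤ 2)]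
    norm_num
  have hlim : Tendsto (fun n => ∑ v : Fin n → Bool, EMetric.diam (tt n v) ^ d)
      atTop (nhds 0) := by
    simp only [hsum]
    have := ENNReal.tendsto_ofReal (real_decay hd)
    simpa using this
  rw [hlim.liminf_eq] at key
  exact le_antisymm key zero_le

end Stmt9Aux

/-- For `m = 2` and `a_k = 4^{−k}`, the Cantor-like set `I` has `dim_H I = 0`
and is HNUP. -/
theorem stmt9 :
    dimH (cantorLikeSet 2 (fun k : ℕ => (4 : ℝ)⁻¹ ^ k)) = 0 ∧
      HNUP (cantorLikeSet 2 (fun k : ℕ => (4 : ℝ)⁻¹ ^ k)) := by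
  have hEq : (fun k : ℕ => (4 : ℝ)⁻¹ ^ k) = Stmt9Aux.aa := rfl
  rw [hEq]
  constructor
  · refine le_antisymm ?_ zero_le
    by_contra hlt
    rw [not_le] at hlt
    obtain ⟨r, h0r, hrdim⟩ := ENNReal.lt_iff_exists_nnreal_btwn.1 hlt
    have hr0 : (0:ℝ) < (r : ℝ) := by exact_mod_cast h0r
    have hle : dimH (cantorLikeSet 2 Stmt9Aux.aa) ≤ (r : ENNReal) := by
      apply dimH_le_of_hausdorffMeasure_ne_top
      rw [Stmt9Aux.hm_zero hr0]
      exact ENNReal.zero_ne_top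
    exact absurd (lt_of_le_of_lt hle hrdim) (lt_irrefl _)
  · exact Stmt9Aux.hnup
end
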